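/- arXiv:2312.05138 — 9 statements merged into one kernel-verified Lean document; each statement's English description precedes it below -/
import Mathlib

section
/- For every real X ≥ 1, ∫_1^X ⌊X/t⌋ · M(t)/t dt = log X, where M(t) = ∑_{n ≤ t} μ(n). -/
open Finset MeasureTheory

namespace MertensIntAux

/-- the (n,k)-indicator piece -/
noncomputable def term (X : ℝ) (p : ℕ × ℕ) : ℝ → ℝ :=
  Set.indicator (Set.Ioc (p.1 : ℝ) (X / p.2))
    (fun u => (ArithmeticFunction.moebius p.1 : ℝ) / u)

lemma term_integrable {X : ℝ} (hX : 1 ≤ X) (p : ℕ × ℕ) :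
    IntervalIntegrable (term X p) MeasureTheory.volume 1 X := by
  rw [intervalIntegrable_iff]
  apply MeasureTheory.Integrable.indicator _ measurableSet_Ioc
  have h : IntervalIntegrable (fun u : ℝ => (ArithmeticFunction.moebius p.1 : ℝ) / u)
      MeasureTheory.volume 1 X := by
    apply ContinuousOn.intervalIntegrable
    apply ContinuousOn.div continuousOn_const continuousOn_id
    intro x hx
    rw [Set.uIcc_of_le hX] at hx
    exact ne_of_gt (lt_of_lt_of_le one_pos hx.1)
  rwa [intervalIntegrable_iff] at h

lemma pointwise {X t : ℝ} (hX : 1 ≤ X) (ht : t ∈ Set.Ioc (1:ℝ) X)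
    (htn : ∀ n : ℕ, (n : ℝ) ≠ t) :
    (⌊X / t⌋ : ℝ) * (∑ n ∈ Finset.Icc 1 ⌊t⌋₊, (ArithmeticFunction.moebius n : ℝ)) / t
      = ∑ p ∈ Finset.Icc 1 ⌊X⌋₊ ×ˢ Finset.Icc 1 ⌊X⌋₊, term X p t := by
  obtain ⟨ht1, htX⟩ := ht
  have ht0 : (0:ℝ) < t := lt_trans one_pos ht1
  have hterm : ∀ p ∈ Finset.Icc 1 ⌊X⌋₊ ×ˢ Finset.Icc 1 ⌊X⌋₊,
      term X p t = ((if (p.1 : ℝ) ≤ t then (ArithmeticFunction.moebius p.1 : ℝ) else 0)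
        * (if (p.2 : ℝ) ≤ X / t then 1 else 0)) / t := by
    rintro ⟨n, k⟩ hp
    simp only [Finset.mem_product, Finset.mem_Icc] at hp
    have hk0 : (0:ℝ) < (k : ℝ) := by exact_mod_cast hp.2.1
    have hiff1 : ((n:ℝ) < t) ↔ ((n:ℝ) ≤ t) :=
      ⟨le_of_lt, fun h => lt_of_le_of_ne h (htn n)⟩
    have hiff2 : (t ≤ X / k) ↔ ((k:ℝ) ≤ X / t) := by
      rw [le_div_iff₀ hk0, le_div_iff₀ ht0, mul_comm]
    rw [term, Set.indicator_apply]
    simp only [Set.mem_Ioc]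
    by_cases h1 : (n:ℝ) ≤ t <;> by_cases h2 : (k:ℝ) ≤ X / t
    · rw [if_pos ⟨hiff1.mpr h1, hiff2.mpr h2⟩, if_pos h1, if_pos h2, mul_one]
    · rw [if_neg (fun hc => h2 (hiff2.mp hc.2)), if_neg h2, mul_zero, zero_div]
    · rw [if_neg (fun hc => h1 (hiff1.mp hc.1)), if_neg h1, zero_mul, zero_div]
    · rw [if_neg (fun hc => h1 (hiff1.mp hc.1)), if_neg h1, zero_mul, zero_div]
  rw [Finset.sum_congr rfl hterm, ← Finset.sum_div]
  congr 1
  rw [Finset.sum_product]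
  dsimp only
  rw [← Finset.sum_mul_sum (f := fun n : ℕ => if (n:ℝ) ≤ t then (ArithmeticFunction.moebius n : ℝ) else 0)
    (g := fun k : ℕ => if (k:ℝ) ≤ X / t then (1:ℝ) else 0)]
  have hf : (∑ n ∈ Finset.Icc 1 ⌊X⌋₊,
        if (n:ℝ) ≤ t then (ArithmeticFunction.moebius n : ℝ) else 0)
      = ∑ n ∈ Finset.Icc 1 ⌊t⌋₊, (ArithmeticFunction.moebius n : ℝ) := by
    rw [← Finset.sum_filter]
    congr 1
    ext n
    simp only [Finset.mem_filter, Finset.mem_Icc]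
    constructor
    · rintro ⟨⟨h1, _⟩, h3⟩
      exact ⟨h1, Nat.le_floor h3⟩
    · rintro ⟨h1, h2⟩
      have hnt : (n:ℝ) ≤ t := le_trans (by exact_mod_cast Nat.le_floor_iff ht0.le |>.mp h2)
        (le_refl t)
      exact ⟨⟨h1, h2.trans (Nat.floor_le_floor htX)⟩, hnt⟩
  have hXt0 : (0:ℝ) ≤ X / t := div_nonneg (by linarith) ht0.le
  have hg : (∑ k ∈ Finset.Icc 1 ⌊X⌋₊, if (k:ℝ) ≤ X / t then (1:ℝ) else 0)
      = (⌊X / t⌋ : ℝ) := by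
    rw [← Finset.sum_filter, Finset.sum_const, nsmul_eq_mul, mul_one]
    have hset : Finset.filter (fun k : ℕ => (k:ℝ) ≤ X / t) (Finset.Icc 1 ⌊X⌋₊)
        = Finset.Icc 1 ⌊X / t⌋₊ := by
      ext k
      simp only [Finset.mem_filter, Finset.mem_Icc, Nat.le_floor_iff hXt0]
      constructor
      · rintro ⟨⟨h1, _⟩, h2⟩
        exact ⟨h1, h2⟩
      · rintro ⟨h1, h2⟩
        exact ⟨⟨h1, Nat.le_floor (h2.trans (div_le_self (by linarith) ht1.le))⟩, h2⟩
    rw [hset, Nat.card_Icc, ← natCast_floor_eq_intCast_floor hXt0]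
    simp
  rw [hf, hg, mul_comm]

lemma integral_term {X : ℝ} (hX : 1 ≤ X) {p : ℕ × ℕ}
    (hp : p ∈ Finset.Icc 1 ⌊X⌋₊ ×ˢ Finset.Icc 1 ⌊X⌋₊) :
    ∫ t in (1:ℝ)..X, term X p t
      = if p.1 * p.2 ≤ ⌊X⌋₊ then
          (ArithmeticFunction.moebius p.1 : ℝ) * Real.log (X / ((p.1 : ℝ) * (p.2 : ℝ)))
        else 0 := by
  obtain ⟨n, k⟩ := p
  simp only [Finset.mem_product, Finset.mem_Icc] at hp
  have hn1 : 1 ≤ n := hp.1.1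
  have hk1 : 1 ≤ k := hp.2.1
  have hn0 : (0:ℝ) < n := by exact_mod_cast hn1
  have hk0 : (0:ℝ) < k := by exact_mod_cast hk1
  have hX0 : (0:ℝ) < X := lt_of_lt_of_le one_pos hX
  have hsub : Set.Ioc (n:ℝ) (X / k) ⊆ Set.Ioc 1 X := by
    intro x hx
    refine ⟨lt_of_le_of_lt (by exact_mod_cast hn1 : (1:ℝ) ≤ n) hx.1, ?_⟩
    exact hx.2.trans (div_le_self hX0.le (by exact_mod_cast hk1))
  rw [intervalIntegral.integral_of_le hX, term]
  rw [MeasureTheory.integral_indicator measurableSet_Ioc,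
    MeasureTheory.Measure.restrict_restrict measurableSet_Ioc,
    Set.inter_eq_left.mpr hsub]
  by_cases h : n * k ≤ ⌊X⌋₊
  · rw [if_pos h]
    have hnk : (n:ℝ) * k ≤ X := by
      have := (Nat.le_floor_iff hX0.le).mp h
      push_cast at this
      linarith
    have hle : (n:ℝ) ≤ X / k := (le_div_iff₀ hk0).mpr hnk
    rw [← intervalIntegral.integral_of_le hle]
    have h0 : (0:ℝ) ∉ Set.uIcc (n:ℝ) (X / k) := by
      rw [Set.uIcc_of_le hle]
      rintro ⟨hc, -⟩
      linarith
    have hrw : (fun u : ℝ => (ArithmeticFunction.moebius n : ℝ) / u)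
        = fun u => (ArithmeticFunction.moebius n : ℝ) * u⁻¹ := by
      funext u; rw [div_eq_mul_inv]
    rw [hrw, intervalIntegral.integral_const_mul, integral_inv h0]
    rw [div_div, mul_comm (k:ℝ) (n:ℝ)]
  · rw [if_neg h]
    have hlt : X / k < n := by
      rw [div_lt_iff₀ hk0]
      by_contra hcon
      push_neg at hcon
      exact h (Nat.le_floor (by push_cast; linarith))
    rw [Set.Ioc_eq_empty (not_lt.mpr hlt.le)]
    simp

lemma sum_eval {X : ℝ} (hX : 1 ≤ X) :
    (∑ p ∈ Finset.Icc 1 ⌊X⌋₊ ×ˢ Finset.Icc 1 ⌊X⌋₊,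
      if p.1 * p.2 ≤ ⌊X⌋₊ then
        (ArithmeticFunction.moebius p.1 : ℝ) * Real.log (X / ((p.1 : ℝ) * (p.2 : ℝ)))
      else 0) = Real.log X := by
  classical
  set N := ⌊X⌋₊ with hN
  have hN1 : 1 ≤ N := Nat.le_floor (by exact_mod_cast hX)
  rw [← Finset.sum_filter]
  have hre : ∑ p ∈ (Finset.Icc 1 N ×ˢ Finset.Icc 1 N).filter (fun p => p.1 * p.2 ≤ N),
      (ArithmeticFunction.moebius p.1 : ℝ) * Real.log (X / ((p.1 : ℝ) * (p.2 : ℝ)))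
      = ∑ m ∈ Finset.Icc 1 N, ∑ p ∈ Nat.divisorsAntidiagonal m,
          (ArithmeticFunction.moebius p.1 : ℝ) * Real.log (X / (m : ℝ)) := by
    rw [Finset.sum_sigma']
    refine Finset.sum_nbij' (fun p => ⟨p.1 * p.2, p⟩) (fun q => q.2) ?_ ?_ ?_ ?_ ?_
    · rintro ⟨n, k⟩ hp
      simp only [Finset.mem_filter, Finset.mem_product, Finset.mem_Icc] at hp
      obtain ⟨⟨⟨hn1, _⟩, ⟨hk1, _⟩⟩, hnk⟩ := hp
      rw [Finset.mem_sigma]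
      refine ⟨Finset.mem_Icc.mpr
        ⟨Nat.one_le_iff_ne_zero.mpr (Nat.mul_ne_zero (by omega) (by omega)), hnk⟩, ?_⟩
      rw [Nat.mem_divisorsAntidiagonal]
      exact ⟨rfl, Nat.mul_ne_zero (by omega) (by omega)⟩
    · rintro ⟨m, n, k⟩ hq
      simp only [Finset.mem_sigma, Finset.mem_Icc, Nat.mem_divisorsAntidiagonal] at hq
      obtain ⟨⟨hm1, hmN⟩, heq, hm0⟩ := hq
      have hn0 : n ≠ 0 := by rintro rfl; simp at heq; omega
      have hk0 : k ≠ 0 := by rintro rfl; simp at heq; omega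
      simp only [Finset.mem_filter, Finset.mem_product, Finset.mem_Icc]
      refine ⟨⟨⟨Nat.one_le_iff_ne_zero.mpr hn0, ?_⟩,
        ⟨Nat.one_le_iff_ne_zero.mpr hk0, ?_⟩⟩, by omega⟩
      · calc n ≤ n * k := Nat.le_mul_of_pos_right n (Nat.pos_of_ne_zero hk0)
          _ = m := heq
          _ ≤ N := hmN
      · calc k ≤ n * k := Nat.le_mul_of_pos_left k (Nat.pos_of_ne_zero hn0)
          _ = m := heq
          _ ≤ N := hmN
    · rintro ⟨n, k⟩ _
      rfl
    · rintro ⟨m, n, k⟩ hq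
      simp only [Finset.mem_sigma, Finset.mem_Icc, Nat.mem_divisorsAntidiagonal] at hq
      exact Sigma.ext hq.2.1 (by simp)
    · rintro ⟨n, k⟩ _
      push_cast
      rfl
  rw [hre]
  have hin : ∀ m ∈ Finset.Icc 1 N,
      (∑ p ∈ Nat.divisorsAntidiagonal m,
        (ArithmeticFunction.moebius p.1 : ℝ) * Real.log (X / (m : ℝ)))
      = (if m = 1 then (1:ℝ) else 0) * Real.log (X / (m : ℝ)) := by
    intro m _
    rw [← Finset.sum_mul]
    congr 1
    rw [Nat.sum_divisorsAntidiagonal (f := fun x _ => (ArithmeticFunction.moebius x : ℝ))]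
    have hz : (∑ i ∈ m.divisors, ArithmeticFunction.moebius i : ℤ)
        = if m = 1 then 1 else 0 := by
      rw [← ArithmeticFunction.coe_mul_zeta_apply, ArithmeticFunction.moebius_mul_coe_zeta,
        ArithmeticFunction.one_apply]
    calc (∑ d ∈ m.divisors, (ArithmeticFunction.moebius d : ℝ))
        = ((∑ i ∈ m.divisors, ArithmeticFunction.moebius i : ℤ) : ℝ) := by push_cast; rfl
      _ = _ := by rw [hz]; split_ifs <;> simp
  rw [Finset.sum_congr rfl hin, Finset.sum_eq_single 1]
  · simp
  · intro b _ hb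
    simp [hb]
  · intro h
    exact absurd (Finset.mem_Icc.mpr ⟨le_refl 1, hN1⟩) h

end MertensIntAux

open Finset

theorem integral_floor_mertens (X : ℝ) (hX : 1 ≤ X) :
    ∫ t in (1:ℝ)..X,
        (⌊X / t⌋ : ℝ) * (∑ n ∈ Finset.Icc 1 ⌊t⌋₊, (ArithmeticFunction.moebius n : ℝ)) / t
      = Real.log X := by
  classical
  have step1 : (∫ t in (1:ℝ)..X,
        (⌊X / t⌋ : ℝ) * (∑ n ∈ Finset.Icc 1 ⌊t⌋₊, (ArithmeticFunction.moebius n : ℝ)) / t)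
      = ∫ t in (1:ℝ)..X,
        ∑ p ∈ Finset.Icc 1 ⌊X⌋₊ ×ˢ Finset.Icc 1 ⌊X⌋₊, MertensIntAux.term X p t := by
    apply intervalIntegral.integral_congr_ae
    have hnull : ∀ᵐ t : ℝ, t ∉ Set.range ((↑) : ℕ → ℝ) := by
      rw [← MeasureTheory.measure_eq_zero_iff_ae_notMem]
      exact Set.Countable.measure_zero (Set.countable_range _) _
    filter_upwards [hnull] with t htn ht
    rw [Set.uIoc_of_le hX] at ht
    exact MertensIntAux.pointwise hX ht (fun n hn => htn ⟨n, hn⟩)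
  rw [step1,
    intervalIntegral.integral_finset_sum (fun p _ => MertensIntAux.term_integrable hX p),
    Finset.sum_congr rfl (fun p hp => MertensIntAux.integral_term hX hp),
    MertensIntAux.sum_eval hX]
end

section
/- For every real X ≥ 1, MacLeod's identity holds: ∑_{n ≤ X} μ(n)·({X/n}² − {X/n})/(X/n) = X·m(X) − M(X) − 2 + 2/X, where m(X) = ∑_{n ≤ X} μ(n)/n and M(X) = ∑_{n ≤ X} μ(n). -/
open Finset ArithmeticFunction

lemma swap_sum (N : ℕ) (F : ℕ → ℕ → ℝ) :
    ∑ q ∈ Finset.Icc 1 N, ∑ p ∈ q.divisorsAntidiagonal, F p.1 p.2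
      = ∑ n ∈ Finset.Icc 1 N, ∑ m ∈ Finset.Icc 1 (N / n), F n m := by
  rw [Finset.sum_sigma', Finset.sum_sigma']
  refine Finset.sum_nbij' (i := fun p => ⟨p.2.1, p.2.2⟩)
    (j := fun p => ⟨p.1 * p.2, (p.1, p.2)⟩) ?_ ?_ ?_ ?_ ?_
  · rintro ⟨q, a, b⟩ hp
    simp only [Finset.mem_sigma, Finset.mem_Icc, Nat.mem_divisorsAntidiagonal] at hp ⊢
    obtain ⟨⟨h1, h2⟩, hab, hq⟩ := hp
    have ha : 0 < a := Nat.pos_of_ne_zero (by rintro rfl; simp at hab; omega)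
    have hb : 0 < b := Nat.pos_of_ne_zero (by rintro rfl; simp at hab; omega)
    refine ⟨⟨ha, le_trans (Nat.le_of_dvd (by omega) ⟨b, hab.symm⟩) h2⟩, hb, ?_⟩
    exact (Nat.le_div_iff_mul_le ha).2 (by rw [Nat.mul_comm, hab]; omega)
  · rintro ⟨a, b⟩ hp
    simp only [Finset.mem_sigma, Finset.mem_Icc, Nat.mem_divisorsAntidiagonal] at hp
    obtain ⟨⟨h1, h2⟩, hb1, hb2⟩ := hp
    have hab := (Nat.le_div_iff_mul_le (by omega : 0 < a)).1 hb2
    refine Finset.mem_sigma.2 ⟨Finset.mem_Icc.2 ⟨?_, ?_⟩,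
      Nat.mem_divisorsAntidiagonal.2 ⟨rfl, ?_⟩⟩
    · show 1 ≤ a * b; exact Nat.one_le_iff_ne_zero.2 (Nat.mul_ne_zero (by omega) (by omega))
    · show a * b ≤ N; rw [Nat.mul_comm]; exact hab
    · show a * b ≠ 0; exact Nat.mul_ne_zero (by omega) (by omega)
  · rintro ⟨q, a, b⟩ hp
    simp only [Finset.mem_sigma, Nat.mem_divisorsAntidiagonal] at hp
    obtain ⟨_, hab, _⟩ := hp
    simp [hab]
  · rintro ⟨a, b⟩ _; rfl
  · rintro ⟨q, a, b⟩ _; rfl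

lemma inner_moebius (q : ℕ) :
    ∑ p ∈ q.divisorsAntidiagonal, ((moebius p.1 : ℤ) : ℝ)
      = if q = 1 then 1 else 0 := by
  have h0 := congrArg (fun f => f q) ArithmeticFunction.moebius_mul_coe_zeta
  simp only [ArithmeticFunction.mul_apply, ArithmeticFunction.one_apply,
    ArithmeticFunction.natCoe_apply, ArithmeticFunction.zeta_apply] at h0
  have h : (∑ p ∈ q.divisorsAntidiagonal, (moebius p.1 : ℤ)) = if q = 1 then 1 else 0 := by
    rw [← h0]
    refine Finset.sum_congr rfl fun p hp => ?_
    rw [Nat.mem_divisorsAntidiagonal] at hp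
    have hne : p.2 ≠ 0 := fun h2 => hp.2 (by rw [← hp.1, h2, mul_zero])
    simp [hne]
  have := congrArg (fun z : ℤ => (z : ℝ)) h
  push_cast at this
  simpa using this

lemma sum_gauss (K : ℕ) : ∑ m ∈ Finset.Icc 1 K, (2 * m) = K * K + K := by
  induction K with
  | zero => simp
  | succ k ih => rw [Finset.sum_Icc_succ_top (by omega), ih]; ring

theorem macleod_identity (X : ℝ) (hX : 1 ≤ X) :
    ∑ n ∈ Finset.Icc 1 ⌊X⌋₊, (ArithmeticFunction.moebius n : ℝ) *
        ((Int.fract (X / n)) ^ 2 - Int.fract (X / n)) / (X / n)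
      = X * (∑ n ∈ Finset.Icc 1 ⌊X⌋₊, (ArithmeticFunction.moebius n : ℝ) / n)
        - (∑ n ∈ Finset.Icc 1 ⌊X⌋₊, (ArithmeticFunction.moebius n : ℝ)) - 2 + 2 / X := by
  set N := ⌊X⌋₊ with hNdef
  have hN1 : 1 ≤ N := Nat.floor_pos.2 hX
  have hX0 : (0:ℝ) < X := by linarith
  -- Identity A : ∑ μ(n) ⌊N/n⌋ = 1
  have hA : ∑ n ∈ Finset.Icc 1 N, (moebius n : ℝ) * ((N / n : ℕ) : ℝ) = 1 := by
    have hs := swap_sum N (fun n _ => (moebius n : ℝ))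
    simp only [Finset.sum_const, nsmul_eq_mul, Nat.card_Icc, Nat.add_sub_cancel] at hs
    have h1 : ∑ q ∈ Finset.Icc 1 N, ∑ p ∈ q.divisorsAntidiagonal, ((moebius p.1 : ℤ) : ℝ)
        = 1 := by
      rw [Finset.sum_congr rfl fun q _ => inner_moebius q]
      rw [Finset.sum_ite_eq' (Finset.Icc 1 N) 1 (fun _ => (1:ℝ))]
      simp [hN1]
    rw [← h1, hs]
    exact Finset.sum_congr rfl fun n _ => by ring
  -- Identity B : ∑ μ(n) n (K² + K) = 2 where K = N/n
  have hB : ∑ n ∈ Finset.Icc 1 N,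
      (moebius n : ℝ) * n * (((N/n) * (N/n) + N/n : ℕ) : ℝ) = 2 := by
    have hs := swap_sum N (fun n m => (moebius n : ℝ) * n * ((2 * m : ℕ) : ℝ))
    have hL : ∀ n ∈ Finset.Icc 1 N,
        ∑ m ∈ Finset.Icc 1 (N/n), (moebius n : ℝ) * n * ((2 * m : ℕ) : ℝ)
          = (moebius n : ℝ) * n * (((N/n) * (N/n) + N/n : ℕ) : ℝ) := by
      intro n _
      rw [← Finset.mul_sum, ← Nat.cast_sum, sum_gauss]
    have hR : ∀ q ∈ Finset.Icc 1 N,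
        ∑ p ∈ q.divisorsAntidiagonal, (moebius p.1 : ℝ) * p.1 * ((2 * p.2 : ℕ) : ℝ)
          = if q = 1 then 2 else 0 := by
      intro q hq
      rw [Finset.mem_Icc] at hq
      have : ∀ p ∈ q.divisorsAntidiagonal,
          (moebius p.1 : ℝ) * p.1 * ((2 * p.2 : ℕ) : ℝ) = 2 * q * (moebius p.1 : ℝ) := by
        intro p hp
        rw [Nat.mem_divisorsAntidiagonal] at hp
        have : ((p.1 : ℝ)) * p.2 = q := by exact_mod_cast congrArg (Nat.cast : ℕ → ℝ) hp.1
        push_cast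
        rw [← this]
        ring
      rw [Finset.sum_congr rfl this, ← Finset.mul_sum, inner_moebius q]
      split
      · next h => rw [h]; norm_num
      · simp
    rw [← Finset.sum_congr rfl hL, ← hs, Finset.sum_congr rfl hR,
      Finset.sum_ite_eq' (Finset.Icc 1 N) 1 (fun _ => (2:ℝ))]
    simp [hN1]
  -- pointwise rewrite
  have key : ∀ n ∈ Finset.Icc 1 N, (moebius n : ℝ) *
      ((Int.fract (X / n)) ^ 2 - Int.fract (X / n)) / (X / n)
      = X * ((moebius n : ℝ) / n) - 2 * ((moebius n : ℝ) * ((N / n : ℕ) : ℝ))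
        - (moebius n : ℝ)
        + ((moebius n : ℝ) * n * (((N/n) * (N/n) + N/n : ℕ) : ℝ)) / X := by
    intro n hn
    rw [Finset.mem_Icc] at hn
    have hn0 : (0:ℝ) < n := by exact_mod_cast hn.1
    have hXn : (0:ℝ) < X / n := by positivity
    have hf : Int.fract (X / n) = X / n - ((N / n : ℕ) : ℝ) := by
      rw [Int.fract, ← natCast_floor_eq_intCast_floor hXn.le, hNdef, ← Nat.floor_div_natCast]
    rw [hf]
    have hfl : ((N / n : ℕ) : ℝ) = X / n - Int.fract (X / n) := by rw [hf]; ring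
    push_cast
    field_simp
    ring
  rw [Finset.sum_congr rfl key]
  rw [Finset.sum_add_distrib, Finset.sum_sub_distrib, Finset.sum_sub_distrib,
    ← Finset.mul_sum, ← Finset.mul_sum, ← Finset.sum_div, hA, hB]
  ring
end

section
/- Let f, g be arithmetic functions, let h : (0,1] → ℂ be Lebesgue-integrable on every compact subinterval of (0,1], and let H : [1,∞) → ℂ be absolutely continuous on every finite interval. Set S_f(t) = ∑_{n ≤ t} f(n) and S_{f⋆g}(t) = ∑_{n ≤ t} (f⋆g)(n) where f⋆g is Dirichlet convolution. Then for X ≥ 1: ∑_{n ≤ X} f(n)·H(X/n) − H(1)·S_f(X) = ∫_1^X S_{f⋆g}(X/t)·h(1/t)·dt/t + ∫_1^X S_f(X/t)·(H'(t) − (1/t)·∑_{n ≤ t} g(n)·h(n/t)) dt. -/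
open Finset MeasureTheory

lemma IF_sum_cut (v : ℕ → ℂ) (M N : ℕ) (hMN : M ≤ N) :
    ∑ n ∈ Finset.Icc 1 M, v n = ∑ n ∈ Finset.Icc 1 N, if n ≤ M then v n else 0 := by
  rw [← Finset.sum_filter]
  congr 1
  ext n
  simp only [Finset.mem_filter, Finset.mem_Icc]
  omega

lemma IF_pair (F : ℕ → ℕ → ℂ) (M N : ℕ) (hMN : M ≤ N) :
    ∑ m ∈ Finset.Icc 1 M, ∑ d ∈ m.divisors, F d (m / d)
      = ∑ d ∈ Finset.Icc 1 N, ∑ e ∈ Finset.Icc 1 N, if d * e ≤ M then F d e else 0 := by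
  have h1 : ∀ m : ℕ, ∑ d ∈ m.divisors, F d (m / d)
      = ∑ p ∈ m.divisorsAntidiagonal, F p.1 p.2 := fun m =>
    (Nat.sum_divisorsAntidiagonal F).symm
  simp only [h1]
  rw [← Finset.sum_biUnion]
  · rw [← Finset.sum_product', ← Finset.sum_filter]
    apply Finset.sum_congr _ (fun _ _ => rfl)
    ext p
    simp only [Finset.mem_biUnion, Finset.mem_Icc, Nat.mem_divisorsAntidiagonal,
      Finset.mem_filter, Finset.mem_product]
    constructor
    · rintro ⟨m, ⟨hm1, hm2⟩, hme, hm0⟩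
      subst hme
      have hp1 : 1 ≤ p.1 := Nat.pos_of_ne_zero (fun hz => by simp [hz] at hm0)
      have hp2 : 1 ≤ p.2 := Nat.pos_of_ne_zero (fun hz => by simp [hz] at hm0)
      refine ⟨⟨⟨hp1, ?_⟩, hp2, ?_⟩, hm2⟩
      · calc p.1 ≤ p.1 * p.2 := Nat.le_mul_of_pos_right _ hp2
          _ ≤ N := le_trans hm2 hMN
      · calc p.2 ≤ p.1 * p.2 := Nat.le_mul_of_pos_left _ hp1
          _ ≤ N := le_trans hm2 hMN
    · rintro ⟨⟨⟨h1', _⟩, h2, _⟩, h5⟩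
      exact ⟨p.1 * p.2, ⟨Nat.one_le_iff_ne_zero.2 (by positivity), h5⟩, rfl, by positivity⟩
  · intro a ha b hb hab
    refine Finset.disjoint_left.2 fun p hp hp' => ?_
    rw [Nat.mem_divisorsAntidiagonal] at hp hp'
    exact hab (hp.1.symm.trans hp'.1)

lemma IF_inter_ae (a b X : ℝ) (ha : 1 ≤ a) (hb : b ≤ X) :
    (Set.Ioc 1 X ∩ Set.Icc a b : Set ℝ) =ᵐ[volume] (Set.Ioc a b : Set ℝ) := by
  rw [MeasureTheory.ae_eq_set]
  constructor
  · refine measure_mono_null (fun x hx => ?_) (Real.volume_singleton (a := a))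
    simp only [Set.mem_diff, Set.mem_inter_iff, Set.mem_Ioc, Set.mem_Icc,
      Set.mem_singleton_iff] at hx ⊢
    rcases hx with ⟨⟨⟨_, _⟩, hax, hxb⟩, hno⟩
    by_contra hne
    exact hno ⟨lt_of_le_of_ne hax (Ne.symm hne), hxb⟩
  · convert MeasureTheory.measure_empty
    · rw [Set.diff_eq_empty]
      intro x hx
      simp only [Set.mem_Ioc] at hx
      exact ⟨⟨lt_of_le_of_lt ha hx.1, le_trans hx.2 hb⟩, le_of_lt hx.1, hx.2⟩
    · infer_instance

lemma IF_ind_int (F : ℝ → ℂ) (a b X : ℝ) (ha : 1 ≤ a) (hab : a ≤ b) (hb : b ≤ X) :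
    ∫ t in (1:ℝ)..X, Set.indicator (Set.Icc a b) F t = ∫ t in a..b, F t := by
  have hX : (1:ℝ) ≤ X := le_trans (le_trans ha hab) hb
  rw [intervalIntegral.integral_of_le hX, intervalIntegral.integral_of_le hab,
    MeasureTheory.setIntegral_indicator measurableSet_Icc,
    MeasureTheory.setIntegral_congr_set (IF_inter_ae a b X ha hb)]

lemma IF_integrable (h : ℝ → ℂ)
    (hh : ∀ a : ℝ, 0 < a → a ≤ 1 → IntegrableOn h (Set.Icc a 1))
    (c a b : ℝ) (hc : 0 < c) (hca : c ≤ a) (hab : a ≤ b) :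
    IntegrableOn (fun t => h (c / t) / (t : ℂ)) (Set.Icc a b) := by
  have ha : 0 < a := lt_of_lt_of_le hc hca
  have hb : 0 < b := lt_of_lt_of_le ha hab
  have hcb : 0 < c / b := div_pos hc hb
  have hca1 : c / a ≤ 1 := (div_le_one ha).2 hca
  have hcba : c / b ≤ c / a := by gcongr
  set s : Set ℝ := Set.Icc (c / b) (c / a) with hs
  have hspos : ∀ x ∈ s, 0 < x := fun x hx => lt_of_lt_of_le hcb hx.1
  have himg : (fun x => c / x) '' s = Set.Icc a b := by
    ext y
    simp only [Set.mem_image, hs, Set.mem_Icc]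
    constructor
    · rintro ⟨x, ⟨hx1, hx2⟩, rfl⟩
      have hx : 0 < x := lt_of_lt_of_le hcb hx1
      constructor
      · rw [le_div_iff₀ hx]
        calc a * x ≤ a * (c / a) := by gcongr
          _ = c := mul_div_cancel₀ _ ha.ne'
      · rw [div_le_iff₀ hx]
        calc c = b * (c / b) := (mul_div_cancel₀ _ hb.ne').symm
          _ ≤ b * x := by gcongr
    · rintro ⟨hy1, hy2⟩
      have hy : 0 < y := lt_of_lt_of_le ha hy1
      refine ⟨c / y, ⟨by gcongr, by gcongr⟩, by field_simp⟩
  have hderiv : ∀ x ∈ s, HasDerivWithinAt (fun x => c / x) (-(c / x ^ 2)) s x := by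
    intro x hx
    have hx0 : x ≠ 0 := (hspos x hx).ne'
    have h1 : HasDerivAt (fun x : ℝ => c / x) (-(c / x ^ 2)) x := by
      simpa [div_eq_mul_inv, mul_neg] using (hasDerivAt_inv hx0).const_mul c
    exact h1.hasDerivWithinAt
  have hinj : Set.InjOn (fun x => c / x) s := by
    intro x hx y hy hxy
    have hx0 : x ≠ 0 := (hspos x hx).ne'
    have hy0 : y ≠ 0 := (hspos y hy).ne'
    field_simp at hxy
    exact hxy.symm
  have key := MeasureTheory.integrableOn_image_iff_integrableOn_abs_deriv_smul
      measurableSet_Icc hderiv hinj (fun t => h (c / t) / (t : ℂ))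
  rw [himg] at key
  rw [key]
  have hint : IntegrableOn (fun x => ((x⁻¹ : ℝ) : ℂ) * h x) s := by
    have h0 : IntegrableOn h s :=
      (hh (c / b) hcb (le_trans hcba hca1)).mono_set (Set.Icc_subset_Icc le_rfl hca1)
    refine MeasureTheory.Integrable.bdd_mul (c := (c / b)⁻¹) h0
      ((Complex.measurable_ofReal.comp measurable_inv).aestronglyMeasurable) ?_
    refine (ae_restrict_iff' measurableSet_Icc).2 (Filter.Eventually.of_forall fun x hxs => ?_)
    have hx0 : 0 < x := hspos x hxs
    rw [Complex.norm_real, Real.norm_eq_abs, abs_of_pos (inv_pos.2 hx0)]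
    exact inv_anti₀ hcb hxs.1
  refine hint.congr_fun ?_ measurableSet_Icc
  intro x hx
  have hx0 : x ≠ 0 := (hspos x hx).ne'
  have h2 : c / (c / x) = x := by field_simp
  simp only [h2]
  rw [abs_neg, abs_of_pos (by positivity : (0:ℝ) < c / x ^ 2), Complex.real_smul]
  have hreal : (c / x ^ 2) * (c / x)⁻¹ = x⁻¹ := by
    field_simp
  calc ((x⁻¹:ℝ):ℂ) * h x = ↑((c / x ^ 2) * (c / x)⁻¹) * h x := by rw [hreal]
    _ = ↑(c / x ^ 2) * (h x / ↑(c / x)) := by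
        rw [div_eq_mul_inv (h x), ← Complex.ofReal_inv, mul_comm (h x), ← mul_assoc,
          ← Complex.ofReal_mul]

lemma IF_intInt (h : ℝ → ℂ)
    (hh : ∀ a : ℝ, 0 < a → a ≤ 1 → IntegrableOn h (Set.Icc a 1))
    (c a b : ℝ) (hc : 0 < c) (hca : c ≤ a) (hab : a ≤ b) :
    IntervalIntegrable (fun t => h (c / t) / (t : ℂ)) volume a b :=
  (intervalIntegrable_iff_integrableOn_Ioc_of_le hab).2
    ((IF_integrable h hh c a b hc hca hab).mono_set Set.Ioc_subset_Icc_self)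

lemma IF_subst (h : ℝ → ℂ) (e Y : ℝ) (he : 0 < e) (heY : e ≤ Y) :
    ∫ t in e..Y, h (e / t) / (t : ℂ) = ∫ t in (1:ℝ)..(Y / e), h (1 / t) / (t : ℂ) := by
  have h1 : ∫ t in e..Y, h (e / t) / (t : ℂ)
      = ∫ t in e..Y, e⁻¹ • ((fun u : ℝ => h (1 / u) / (u : ℂ)) (e⁻¹ * t)) := by
    apply intervalIntegral.integral_congr
    intro t ht
    rw [Set.uIcc_of_le heY, Set.mem_Icc] at ht
    have ht0 : 0 < t := lt_of_lt_of_le he ht.1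
    simp only
    have hq : 1 / (e⁻¹ * t) = e / t := by field_simp
    rw [hq, Complex.real_smul]
    have : ((e⁻¹ * t : ℝ) : ℂ) = (e⁻¹ : ℝ) * (t : ℂ) := by push_cast; ring
    rw [this]
    have hec : ((e⁻¹ : ℝ) : ℂ) ≠ 0 := Complex.ofReal_ne_zero.2 (inv_ne_zero he.ne')
    have htc : (t : ℂ) ≠ 0 := Complex.ofReal_ne_zero.2 ht0.ne'
    field_simp
    rw [mul_div_assoc, div_self (Complex.ofReal_ne_zero.2 (one_div_ne_zero he.ne')), mul_one]
  rw [h1, intervalIntegral.integral_smul,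
    intervalIntegral.integral_comp_mul_left (a := e) (b := Y)
      (fun u : ℝ => h (1 / u) / (u : ℂ)) (inv_ne_zero he.ne'), smul_smul,
    mul_inv_cancel₀ (inv_ne_zero he.ne'), one_smul, inv_mul_cancel₀ he.ne', inv_mul_eq_div]

/-- The Identity Factory (Theorem OFD). `H'` is the a.e. derivative of the locally
absolutely continuous function `H`, encoded by the fundamental theorem of calculus
hypothesis `hH`. -/
theorem identity_factory (f g : ℕ → ℂ) (h : ℝ → ℂ) (H H' : ℝ → ℂ)
    (hh : ∀ a : ℝ, 0 < a → a ≤ 1 → IntegrableOn h (Set.Icc a 1))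
    (hH' : ∀ b : ℝ, 1 ≤ b → IntervalIntegrable H' volume 1 b)
    (hH : ∀ t : ℝ, 1 ≤ t → H t = H 1 + ∫ u in (1:ℝ)..t, H' u)
    (X : ℝ) (hX : 1 ≤ X) :
    (∑ n ∈ Finset.Icc 1 ⌊X⌋₊, f n * H (X / n))
        - H 1 * (∑ n ∈ Finset.Icc 1 ⌊X⌋₊, f n)
      = (∫ t in (1:ℝ)..X,
          (∑ m ∈ Finset.Icc 1 ⌊X / t⌋₊, ∑ d ∈ m.divisors, f d * g (m / d))
            * h (1 / t) / t)
        + ∫ t in (1:ℝ)..X,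
            (∑ n ∈ Finset.Icc 1 ⌊X / t⌋₊, f n)
              * (H' t - (1 / t) * ∑ n ∈ Finset.Icc 1 ⌊t⌋₊, g n * h (n / t)) := by
  have hX0 : (0:ℝ) < X := lt_of_lt_of_le one_pos hX
  set N := ⌊X⌋₊ with hNdef
  have hNX : (N:ℝ) ≤ X := Nat.floor_le hX0.le
  -- ######## keyP ########
  have hcongrP : Set.EqOn (fun t : ℝ => (∑ n ∈ Finset.Icc 1 ⌊X / t⌋₊, f n) * H' t)
        (fun t : ℝ => ∑ n ∈ Finset.Icc 1 N,
          Set.indicator (Set.Icc 1 (X / (n:ℝ))) (fun u => f n * H' u) t)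
        (Set.uIcc (1:ℝ) X) := by
      intro t ht
      rw [Set.uIcc_of_le hX, Set.mem_Icc] at ht
      have ht0 : 0 < t := lt_of_lt_of_le one_pos ht.1
      have hfl : ⌊X / t⌋₊ ≤ N := Nat.floor_mono (div_le_self hX0.le ht.1)
      simp only
      rw [IF_sum_cut f _ N hfl, Finset.sum_mul]
      refine Finset.sum_congr rfl fun n hn => ?_
      rw [Finset.mem_Icc] at hn
      have hn0 : (0:ℝ) < (n:ℝ) := by exact_mod_cast hn.1
      have hiff : n ≤ ⌊X / t⌋₊ ↔ t ∈ Set.Icc 1 (X / (n:ℝ)) := by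
        rw [Set.mem_Icc, Nat.le_floor_iff (by positivity), le_div_iff₀ ht0, le_div_iff₀ hn0,
          mul_comm]
        exact ⟨fun h' => ⟨ht.1, h'⟩, fun h' => h'.2⟩
      rw [ite_mul, zero_mul, Set.indicator_apply, if_congr hiff rfl rfl]
  have hintP : ∀ n ∈ Finset.Icc 1 N, IntervalIntegrable
      (Set.indicator (Set.Icc 1 (X / (n:ℝ))) (fun u => f n * H' u)) volume 1 X := by
      intro n hn
      rw [Finset.mem_Icc] at hn
      have h1n : (1:ℝ) ≤ (n:ℝ) := by exact_mod_cast hn.1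
      have hnX : (n:ℝ) ≤ X := le_trans (by exact_mod_cast hn.2) hNX
      have hXn1 : (1:ℝ) ≤ X / (n:ℝ) := (one_le_div (by linarith)).2 hnX
      have h1 : IntegrableOn (fun u => f n * H' u) (Set.Icc 1 (X / (n:ℝ))) := by
        rw [integrableOn_Icc_iff_integrableOn_Ioc]
        exact (((intervalIntegrable_iff_integrableOn_Ioc_of_le hXn1).1
          (hH' _ hXn1)).const_mul (f n))
      exact (h1.integrable_indicator measurableSet_Icc).intervalIntegrable
  have keyP : ∫ t in (1:ℝ)..X, (∑ n ∈ Finset.Icc 1 ⌊X / t⌋₊, f n) * H' t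
      = ∑ n ∈ Finset.Icc 1 N, f n * (H (X / (n:ℝ)) - H 1) := by
    rw [intervalIntegral.integral_congr hcongrP]
    rw [intervalIntegral.integral_finset_sum hintP]
    refine Finset.sum_congr rfl fun n hn => ?_
    rw [Finset.mem_Icc] at hn
    have h1n : (1:ℝ) ≤ (n:ℝ) := by exact_mod_cast hn.1
    have hnX : (n:ℝ) ≤ X := le_trans (by exact_mod_cast hn.2) hNX
    have hXn1 : (1:ℝ) ≤ X / (n:ℝ) := (one_le_div (by linarith)).2 hnX
    have hXnX : X / (n:ℝ) ≤ X := div_le_self hX0.le h1n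
    rw [IF_ind_int _ 1 (X / (n:ℝ)) X le_rfl hXn1 hXnX,
      intervalIntegral.integral_const_mul, hH (X / (n:ℝ)) hXn1]
    ring
  -- ######## keyR ########
  have hcongrR : Set.EqOn
      (fun t : ℝ => (∑ m ∈ Finset.Icc 1 ⌊X / t⌋₊, ∑ d ∈ m.divisors, f d * g (m / d))
        * h (1 / t) / t)
      (fun t : ℝ => ∑ p ∈ Finset.Icc 1 N ×ˢ Finset.Icc 1 N,
        Set.indicator (Set.Icc 1 (X / ((p.1:ℝ) * (p.2:ℝ))))
          (fun u => f p.1 * g p.2 * (h (1 / u) / (u:ℂ))) t)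
      (Set.uIcc (1:ℝ) X) := by
    intro t ht
    rw [Set.uIcc_of_le hX, Set.mem_Icc] at ht
    have ht0 : 0 < t := lt_of_lt_of_le one_pos ht.1
    have hfl : ⌊X / t⌋₊ ≤ N := Nat.floor_mono (div_le_self hX0.le ht.1)
    simp only
    rw [IF_pair (fun d e => f d * g e) _ N hfl, Finset.sum_product,
      Finset.sum_mul, Finset.sum_div]
    dsimp only
    refine Finset.sum_congr rfl fun d hd => ?_
    rw [Finset.sum_mul, Finset.sum_div]
    refine Finset.sum_congr rfl fun e he => ?_
    rw [Finset.mem_Icc] at hd he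
    have hd0 : (0:ℝ) < (d:ℝ) := by exact_mod_cast hd.1
    have he0 : (0:ℝ) < (e:ℝ) := by exact_mod_cast he.1
    have hde0 : (0:ℝ) < (d:ℝ) * e := by positivity
    have hiff : d * e ≤ ⌊X / t⌋₊ ↔ t ∈ Set.Icc 1 (X / ((d:ℝ) * e)) := by
      rw [Set.mem_Icc, Nat.le_floor_iff (by positivity), le_div_iff₀ ht0, le_div_iff₀ hde0,
        mul_comm]
      push_cast
      exact ⟨fun h' => ⟨ht.1, h'⟩, fun h' => h'.2⟩
    rw [mul_div_assoc, ite_mul, zero_mul, Set.indicator_apply, if_congr hiff rfl rfl]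
  have hintR : ∀ p ∈ Finset.Icc 1 N ×ˢ Finset.Icc 1 N, IntervalIntegrable
      (Set.indicator (Set.Icc 1 (X / ((p.1:ℝ) * (p.2:ℝ))))
        (fun u => f p.1 * g p.2 * (h (1 / u) / (u:ℂ)))) volume 1 X := by
    intro p _
    by_cases hc : (1:ℝ) ≤ X / ((p.1:ℝ) * (p.2:ℝ))
    · have h1 : IntegrableOn (fun u : ℝ => f p.1 * g p.2 * (h (1 / u) / (u:ℂ)))
          (Set.Icc 1 (X / ((p.1:ℝ) * (p.2:ℝ)))) :=
        (IF_integrable h hh 1 1 _ one_pos le_rfl hc).const_mul _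
      exact (h1.integrable_indicator measurableSet_Icc).intervalIntegrable
    · rw [Set.Icc_eq_empty hc]
      simp only [Set.indicator_empty]
      exact intervalIntegrable_const
  have keyR : (∫ t in (1:ℝ)..X,
      (∑ m ∈ Finset.Icc 1 ⌊X / t⌋₊, ∑ d ∈ m.divisors, f d * g (m / d)) * h (1 / t) / t)
      = ∑ p ∈ Finset.Icc 1 N ×ˢ Finset.Icc 1 N, ∫ t in (1:ℝ)..X,
          Set.indicator (Set.Icc 1 (X / ((p.1:ℝ) * (p.2:ℝ))))
            (fun u => f p.1 * g p.2 * (h (1 / u) / (u:ℂ))) t := by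
    rw [intervalIntegral.integral_congr hcongrR, intervalIntegral.integral_finset_sum hintR]
  -- ######## keyQ ########
  have hcongrQ : Set.EqOn
      (fun t : ℝ => (∑ n ∈ Finset.Icc 1 ⌊X / t⌋₊, f n)
        * ((1 / t) * ∑ n ∈ Finset.Icc 1 ⌊t⌋₊, g n * h (n / t)))
      (fun t : ℝ => ∑ p ∈ Finset.Icc 1 N ×ˢ Finset.Icc 1 N,
        Set.indicator (Set.Icc (p.2:ℝ) (X / (p.1:ℝ)))
          (fun u => f p.1 * g p.2 * (h ((p.2:ℝ) / u) / (u:ℂ))) t)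
      (Set.uIcc (1:ℝ) X) := by
    intro t ht
    rw [Set.uIcc_of_le hX, Set.mem_Icc] at ht
    have ht0 : 0 < t := lt_of_lt_of_le one_pos ht.1
    have hfl1 : ⌊X / t⌋₊ ≤ N := Nat.floor_mono (div_le_self hX0.le ht.1)
    have hfl2 : ⌊t⌋₊ ≤ N := Nat.floor_mono ht.2
    simp only
    rw [IF_sum_cut f _ N hfl1, IF_sum_cut (fun n => g n * h ((n:ℝ) / t)) _ N hfl2,
      Finset.mul_sum, Finset.sum_mul_sum, Finset.sum_product]
    dsimp only
    refine Finset.sum_congr rfl fun d hd => ?_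
    refine Finset.sum_congr rfl fun e he => ?_
    rw [Finset.mem_Icc] at hd he
    have hd0 : (0:ℝ) < (d:ℝ) := by exact_mod_cast hd.1
    have hcd : d ≤ ⌊X / t⌋₊ ↔ t ≤ X / (d:ℝ) := by
      rw [Nat.le_floor_iff (by positivity), le_div_iff₀ ht0, le_div_iff₀ hd0, mul_comm]
    have hce : e ≤ ⌊t⌋₊ ↔ (e:ℝ) ≤ t := Nat.le_floor_iff ht0.le
    rw [Set.indicator_apply]; simp only [Set.mem_Icc]
    by_cases h1 : d ≤ ⌊X / t⌋₊ <;> by_cases h2 : e ≤ ⌊t⌋₊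
    · rw [if_pos h1, if_pos h2, if_pos ⟨hce.1 h2, hcd.1 h1⟩]; ring
    · have hmem : ¬((e:ℝ) ≤ t ∧ t ≤ X / (d:ℝ)) := fun hm => h2 (hce.2 hm.1)
      rw [if_pos h1, if_neg h2, if_neg hmem]; ring
    · have hmem : ¬((e:ℝ) ≤ t ∧ t ≤ X / (d:ℝ)) := fun hm => h1 (hcd.2 hm.2)
      rw [if_neg h1, if_neg hmem]; ring
    · have hmem : ¬((e:ℝ) ≤ t ∧ t ≤ X / (d:ℝ)) := fun hm => h2 (hce.2 hm.1)
      rw [if_neg h1, if_neg hmem]; ring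
  have hintQ : ∀ p ∈ Finset.Icc 1 N ×ˢ Finset.Icc 1 N, IntervalIntegrable
      (Set.indicator (Set.Icc (p.2:ℝ) (X / (p.1:ℝ)))
        (fun u => f p.1 * g p.2 * (h ((p.2:ℝ) / u) / (u:ℂ)))) volume 1 X := by
    intro p hp
    rw [Finset.mem_product, Finset.mem_Icc, Finset.mem_Icc] at hp
    have he1 : (1:ℝ) ≤ (p.2:ℝ) := by exact_mod_cast hp.2.1
    by_cases hc : (p.2:ℝ) ≤ X / (p.1:ℝ)
    · have h1 : IntegrableOn (fun u : ℝ => f p.1 * g p.2 * (h ((p.2:ℝ) / u) / (u:ℂ)))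
          (Set.Icc (p.2:ℝ) (X / (p.1:ℝ))) :=
        (IF_integrable h hh (p.2:ℝ) (p.2:ℝ) _ (by linarith) le_rfl hc).const_mul _
      exact (h1.integrable_indicator measurableSet_Icc).intervalIntegrable
    · rw [Set.Icc_eq_empty hc]
      simp only [Set.indicator_empty]
      exact intervalIntegrable_const
  have keyQ : (∫ t in (1:ℝ)..X,
      (∑ n ∈ Finset.Icc 1 ⌊X / t⌋₊, f n)
        * ((1 / t) * ∑ n ∈ Finset.Icc 1 ⌊t⌋₊, g n * h (n / t)))
      = ∑ p ∈ Finset.Icc 1 N ×ˢ Finset.Icc 1 N, ∫ t in (1:ℝ)..X,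
          Set.indicator (Set.Icc (p.2:ℝ) (X / (p.1:ℝ)))
            (fun u => f p.1 * g p.2 * (h ((p.2:ℝ) / u) / (u:ℂ))) t := by
    rw [intervalIntegral.integral_congr hcongrQ, intervalIntegral.integral_finset_sum hintQ]
  -- ######## per-pair equality ########
  have keyRQ : ∀ p ∈ Finset.Icc 1 N ×ˢ Finset.Icc 1 N,
      (∫ t in (1:ℝ)..X, Set.indicator (Set.Icc 1 (X / ((p.1:ℝ) * (p.2:ℝ))))
          (fun u => f p.1 * g p.2 * (h (1 / u) / (u:ℂ))) t)
      = ∫ t in (1:ℝ)..X, Set.indicator (Set.Icc (p.2:ℝ) (X / (p.1:ℝ)))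
          (fun u => f p.1 * g p.2 * (h ((p.2:ℝ) / u) / (u:ℂ))) t := by
    intro p hp
    rw [Finset.mem_product, Finset.mem_Icc, Finset.mem_Icc] at hp
    have hd1 : (1:ℝ) ≤ (p.1:ℝ) := by exact_mod_cast hp.1.1
    have he1 : (1:ℝ) ≤ (p.2:ℝ) := by exact_mod_cast hp.2.1
    have hd0 : (0:ℝ) < (p.1:ℝ) := by linarith
    have he0 : (0:ℝ) < (p.2:ℝ) := by linarith
    by_cases hde : (p.1:ℝ) * (p.2:ℝ) ≤ X
    · have hde0 : (0:ℝ) < (p.1:ℝ) * (p.2:ℝ) := by positivity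
      have hde1 : (1:ℝ) ≤ (p.1:ℝ) * (p.2:ℝ) := by nlinarith
      have hc1 : (1:ℝ) ≤ X / ((p.1:ℝ) * (p.2:ℝ)) := (one_le_div hde0).2 hde
      have hcX : X / ((p.1:ℝ) * (p.2:ℝ)) ≤ X := div_le_self hX0.le hde1
      have heXd : (p.2:ℝ) ≤ X / (p.1:ℝ) := (le_div_iff₀ hd0).2 (by nlinarith)
      have hXdX : X / (p.1:ℝ) ≤ X := div_le_self hX0.le hd1
      rw [IF_ind_int _ 1 _ X le_rfl hc1 hcX, IF_ind_int _ _ _ X he1 heXd hXdX,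
        intervalIntegral.integral_const_mul, intervalIntegral.integral_const_mul,
        IF_subst h (p.2:ℝ) (X / (p.1:ℝ)) he0 heXd, div_div]
    · push_neg at hde
      have h1 : ¬ (1:ℝ) ≤ X / ((p.1:ℝ) * (p.2:ℝ)) := by
        rw [not_le, div_lt_one (by positivity)]
        exact hde
      have h2 : ¬ (p.2:ℝ) ≤ X / (p.1:ℝ) := by
        rw [not_le, div_lt_iff₀ hd0]
        nlinarith
      rw [Set.Icc_eq_empty h1, Set.Icc_eq_empty h2]
      simp
  -- ######## assembly ########
  have hsub : Set.Ioc (1:ℝ) X ⊆ Set.uIcc (1:ℝ) X := by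
    rw [Set.uIcc_of_le hX]; exact Set.Ioc_subset_Icc_self
  have hAint : IntervalIntegrable
      (fun t : ℝ => (∑ n ∈ Finset.Icc 1 ⌊X / t⌋₊, f n) * H' t) volume 1 X := by
    rw [intervalIntegrable_iff_integrableOn_Ioc_of_le hX]
    have hsum : IntegrableOn (fun t : ℝ => ∑ n ∈ Finset.Icc 1 N,
        Set.indicator (Set.Icc 1 (X / (n:ℝ))) (fun u => f n * H' u) t) (Set.Ioc 1 X) :=
      MeasureTheory.integrable_finset_sum _ (fun n hn =>
        ((intervalIntegrable_iff_integrableOn_Ioc_of_le hX).1 (hintP n hn)))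
    exact hsum.congr_fun (fun x hx => (hcongrP (hsub hx)).symm) measurableSet_Ioc
  have hBint : IntervalIntegrable
      (fun t : ℝ => (∑ n ∈ Finset.Icc 1 ⌊X / t⌋₊, f n)
        * ((1 / t) * ∑ n ∈ Finset.Icc 1 ⌊t⌋₊, g n * h (n / t))) volume 1 X := by
    rw [intervalIntegrable_iff_integrableOn_Ioc_of_le hX]
    have hsum : IntegrableOn (fun t : ℝ => ∑ p ∈ Finset.Icc 1 N ×ˢ Finset.Icc 1 N,
        Set.indicator (Set.Icc (p.2:ℝ) (X / (p.1:ℝ)))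
          (fun u => f p.1 * g p.2 * (h ((p.2:ℝ) / u) / (u:ℂ))) t) (Set.Ioc 1 X) :=
      MeasureTheory.integrable_finset_sum _ (fun p hp =>
        ((intervalIntegrable_iff_integrableOn_Ioc_of_le hX).1 (hintQ p hp)))
    exact hsum.congr_fun (fun x hx => (hcongrQ (hsub hx)).symm) measurableSet_Ioc
  have hsplit : (∫ t in (1:ℝ)..X, (∑ n ∈ Finset.Icc 1 ⌊X / t⌋₊, f n)
        * (H' t - (1 / t) * ∑ n ∈ Finset.Icc 1 ⌊t⌋₊, g n * h (n / t)))
      = (∫ t in (1:ℝ)..X, (∑ n ∈ Finset.Icc 1 ⌊X / t⌋₊, f n) * H' t)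
        - ∫ t in (1:ℝ)..X, (∑ n ∈ Finset.Icc 1 ⌊X / t⌋₊, f n)
            * ((1 / t) * ∑ n ∈ Finset.Icc 1 ⌊t⌋₊, g n * h (n / t)) := by
    rw [← intervalIntegral.integral_sub hAint hBint]
    apply intervalIntegral.integral_congr
    intro t _
    simp only
    ring
  have hLHS : (∑ n ∈ Finset.Icc 1 N, f n * H (X / n))
      - H 1 * (∑ n ∈ Finset.Icc 1 N, f n)
      = ∑ n ∈ Finset.Icc 1 N, f n * (H (X / (n:ℝ)) - H 1) := by
    rw [Finset.mul_sum, ← Finset.sum_sub_distrib]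
    exact Finset.sum_congr rfl fun n _ => by ring
  have hRQ : (∑ p ∈ Finset.Icc 1 N ×ˢ Finset.Icc 1 N, ∫ t in (1:ℝ)..X,
        Set.indicator (Set.Icc 1 (X / ((p.1:ℝ) * (p.2:ℝ))))
          (fun u => f p.1 * g p.2 * (h (1 / u) / (u:ℂ))) t)
      = ∑ p ∈ Finset.Icc 1 N ×ˢ Finset.Icc 1 N, ∫ t in (1:ℝ)..X,
        Set.indicator (Set.Icc (p.2:ℝ) (X / (p.1:ℝ)))
          (fun u => f p.1 * g p.2 * (h ((p.2:ℝ) / u) / (u:ℂ))) t :=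
    Finset.sum_congr rfl keyRQ
  rw [hsplit, hLHS, keyP, keyQ, keyR, hRQ]
  ring
end

section
/- For any positive integer n, the Dirichlet convolution G₁(n) = ∑_{d₁d₂ = n, gcd(d₁,q)=1} μ(d₁)·(−1)^{d₂+1} equals 1_{n | q^∞}(n) − 2·1_{2 | n and (n/2) | q^∞}(n), where d | q^∞ means every prime factor of d divides q. -/
open Finset
open scoped Classical

namespace G1Aux
open ArithmeticFunction
open scoped ArithmeticFunction.Moebius

open Finset ArithmeticFunction
open scoped Classical

private lemma sum_moebius_divisors (b : ℕ) :
    (∑ d ∈ b.divisors, (μ d : ℤ)) = if b = 1 then 1 else 0 := by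
  have := congrArg (fun f : ArithmeticFunction ℤ => f b) moebius_mul_coe_zeta
  simp only [coe_mul_zeta_apply, one_apply] at this
  exact this

private lemma key (q : ℕ) (m : ℕ) (hm : 0 < m) :
    (∑ d ∈ m.divisors, (if Nat.gcd d q = 1 then (μ d : ℤ) else 0))
      = if ∀ p : ℕ, p.Prime → p ∣ m → p ∣ q then 1 else 0 := by
  set S := m.primeFactors.filter (fun p => ¬ p ∣ q) with hS
  set b := ∏ p ∈ S, p ^ m.factorization p with hb
  have hSp : ∀ p ∈ S, p.Prime ∧ p ∣ m ∧ ¬ p ∣ q := by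
    intro p hp
    obtain ⟨h1, h2⟩ := Finset.mem_filter.mp hp
    exact ⟨Nat.prime_of_mem_primeFactors h1, Nat.dvd_of_mem_primeFactors h1, h2⟩
  have hbpos : 0 < b := Finset.prod_pos fun p hp => pow_pos (hSp p hp).1.pos _
  have hbdvd : b ∣ m := by
    have h1 : b ∣ ∏ p ∈ m.primeFactors, p ^ m.factorization p :=
      Finset.prod_dvd_prod_of_subset _ _ _ (Finset.filter_subset _ _)
    have h2 : ∏ p ∈ m.primeFactors, p ^ m.factorization p = m := by
      rw [← Nat.prod_factorization_eq_prod_primeFactors]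
      exact Nat.factorization_prod_pow_eq_self hm.ne'
    rwa [h2] at h1
  have hbcop : Nat.Coprime b q := by
    apply Nat.Coprime.prod_left
    intro p hp
    exact ((Nat.Prime.coprime_iff_not_dvd (hSp p hp).1).mpr (hSp p hp).2.2).pow_left _
  have hbfact : ∀ r : ℕ, b.factorization r = if r ∈ S then m.factorization r else 0 := by
    intro r
    rw [hb, Nat.factorization_prod (fun p hp => (pow_pos (hSp p hp).1.pos _).ne')]
    rw [Finsupp.finset_sum_apply]
    have heq : ∀ p ∈ S, ((p ^ m.factorization p).factorization) r
        = if p = r then m.factorization r else 0 := by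
      intro p hp
      rw [(hSp p hp).1.factorization_pow, Finsupp.single_apply]
      split <;> simp_all
    rw [Finset.sum_congr rfl heq, Finset.sum_ite_eq' S r (fun _ => m.factorization r)]
  have hchar : ∀ d : ℕ, d ∣ b ↔ d ∣ m ∧ Nat.gcd d q = 1 := by
    intro d
    constructor
    · intro hd
      exact ⟨hd.trans hbdvd, Nat.Coprime.coprime_dvd_left hd hbcop⟩
    · rintro ⟨hdm, hcop⟩
      have hd0 : d ≠ 0 := by
        rintro rfl; exact hm.ne' (Nat.eq_zero_of_zero_dvd hdm)
      rw [← Nat.factorization_le_iff_dvd hd0 hbpos.ne']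
      intro r
      rw [hbfact r]
      by_cases hrp : r.Prime
      · by_cases hrq : r ∣ q
        · have hnd : ¬ r ∣ d := by
            intro hrd
            have h1 : r ∣ 1 := hcop ▸ Nat.dvd_gcd hrd hrq
            exact hrp.one_lt.ne' (Nat.dvd_one.mp h1)
          simp [Nat.factorization_eq_zero_of_not_dvd hnd]
        · by_cases hrd : r ∣ d
          · have hrS : r ∈ S := Finset.mem_filter.mpr
              ⟨Nat.mem_primeFactors.mpr ⟨hrp, hrd.trans hdm, hm.ne'⟩, hrq⟩
            rw [if_pos hrS]
            exact (Nat.factorization_le_iff_dvd hd0 hm.ne').mpr hdm r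
          · simp [Nat.factorization_eq_zero_of_not_dvd hrd]
      · simp [Nat.factorization_eq_zero_of_not_prime d hrp]
  have hfilter : m.divisors.filter (fun d => Nat.gcd d q = 1) = b.divisors := by
    ext d
    simp only [Finset.mem_filter, Nat.mem_divisors, hbpos.ne', hm.ne', ne_eq,
      not_false_eq_true, and_true]
    rw [hchar d]
  have hsum : (∑ d ∈ m.divisors, (if Nat.gcd d q = 1 then (μ d : ℤ) else 0))
      = ∑ d ∈ b.divisors, (μ d : ℤ) := by
    rw [← hfilter, Finset.sum_filter]
  rw [hsum, sum_moebius_divisors]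
  have hbone : b = 1 ↔ ∀ p : ℕ, p.Prime → p ∣ m → p ∣ q := by
    constructor
    · intro h1 p hp hpm
      by_contra hpq
      have hpS : p ∈ S := Finset.mem_filter.mpr
        ⟨Nat.mem_primeFactors.mpr ⟨hp, hpm, hm.ne'⟩, hpq⟩
      have hpb : p ∣ b := by
        refine dvd_trans ?_ (Finset.dvd_prod_of_mem _ hpS)
        exact dvd_pow_self p (hp.factorization_pos_of_dvd hm.ne' hpm).ne'
      rw [h1] at hpb
      exact hp.one_lt.ne' (Nat.dvd_one.mp hpb)
    · intro h
      have hSe : S = ∅ := by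
        rw [Finset.eq_empty_iff_forall_notMem]
        intro p hp
        exact (hSp p hp).2.2 (h p (hSp p hp).1 (hSp p hp).2.1)
      rw [hb, hSe, Finset.prod_empty]
  simp only [hbone]

end G1Aux

open G1Aux ArithmeticFunction ArithmeticFunction.Moebius in
theorem G1_convolution_identity (q n : ℕ) (hq : 0 < q) (hn : 0 < n) :
    (∑ d ∈ n.divisors,
        (if Nat.gcd d q = 1 then (ArithmeticFunction.moebius d : ℤ) else 0)
          * (-1) ^ (n / d + 1))
      = (if ∀ p : ℕ, p.Prime → p ∣ n → p ∣ q then (1 : ℤ) else 0)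
        - 2 * (if 2 ∣ n ∧ ∀ p : ℕ, p.Prime → p ∣ n / 2 → p ∣ q then (1 : ℤ) else 0) := by
  have hpow : ∀ k : ℕ, ((-1 : ℤ)) ^ (k + 1) = 1 - 2 * (if 2 ∣ k then 1 else 0) := by
    intro k
    rcases Nat.even_or_odd k with h | h
    · rw [if_pos h.two_dvd, (h.add_one).neg_one_pow]; ring
    · have h' : ¬ 2 ∣ k := by rw [Nat.two_dvd_ne_zero]; exact Nat.odd_iff.mp h
      rw [if_neg h', Odd.add_one h |>.neg_one_pow]; ring
  have hsplit : (∑ d ∈ n.divisors,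
        (if Nat.gcd d q = 1 then (μ d : ℤ) else 0) * (-1) ^ (n / d + 1))
      = (∑ d ∈ n.divisors, (if Nat.gcd d q = 1 then (μ d : ℤ) else 0))
        - 2 * ∑ d ∈ n.divisors,
            (if Nat.gcd d q = 1 ∧ 2 ∣ n / d then (μ d : ℤ) else 0) := by
    rw [Finset.mul_sum, ← Finset.sum_sub_distrib]
    apply Finset.sum_congr rfl
    intro d _
    rw [hpow (n / d)]
    by_cases h1 : Nat.gcd d q = 1 <;> by_cases h2 : 2 ∣ n / d <;>
      simp [h1, h2] <;> ring
  rw [hsplit, key q n hn]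
  congr 1
  by_cases h2 : 2 ∣ n
  · have hn2 : 0 < n / 2 := Nat.div_pos (Nat.le_of_dvd hn h2) two_pos
    have hfe : n.divisors.filter (fun d => 2 ∣ n / d) = (n / 2).divisors := by
      ext d
      simp only [Finset.mem_filter, Nat.mem_divisors, hn.ne', hn2.ne', ne_eq,
        not_false_eq_true, and_true]
      constructor
      · rintro ⟨hd, hdvd⟩
        rw [Nat.dvd_div_iff_mul_dvd h2, mul_comm]
        exact (Nat.dvd_div_iff_mul_dvd hd).mp hdvd
      · intro hd
        have h2d : 2 * d ∣ n := (Nat.dvd_div_iff_mul_dvd h2).mp hd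
        have hdn : d ∣ n := (dvd_mul_left d 2).trans h2d
        exact ⟨hdn, (Nat.dvd_div_iff_mul_dvd hdn).mpr (mul_comm 2 d ▸ h2d)⟩
    have : (∑ d ∈ n.divisors, (if Nat.gcd d q = 1 ∧ 2 ∣ n / d then (μ d : ℤ) else 0))
        = ∑ d ∈ (n / 2).divisors, (if Nat.gcd d q = 1 then (μ d : ℤ) else 0) := by
      rw [← hfe, Finset.sum_filter]
      apply Finset.sum_congr rfl
      intro d _
      by_cases ha : Nat.gcd d q = 1 <;> by_cases hb : 2 ∣ n / d <;> simp [ha, hb]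
    rw [this, key q (n / 2) hn2]
    congr 1
    simp [h2]
  · have hz : (∑ d ∈ n.divisors, (if Nat.gcd d q = 1 ∧ 2 ∣ n / d then (μ d : ℤ) else 0)) = 0 := by
      apply Finset.sum_eq_zero
      intro d hd
      rw [Nat.mem_divisors] at hd
      have : ¬ 2 ∣ n / d := fun h => h2 (h.trans (Nat.div_dvd_of_dvd hd.1))
      simp [this]
    rw [hz]
    simp [h2]
end

section
/- For any positive integer q and real X > 0, ∑_{n ≤ X} G₁(n)/n = ∑_{X/2 < ℓ ≤ X, ℓ | q^∞} 1/ℓ, where G₁(n) = ∑_{d₁d₂=n, gcd(d₁,q)=1} μ(d₁)·(−1)^{d₂+1}. -/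
open Finset ArithmeticFunction
open scoped Classical

lemma g_eq (q : ℕ) (n : ℕ) (hn : n ≠ 0) :
    ∑ d ∈ n.divisors, (if Nat.gcd d q = 1 then (moebius d : ℤ) else 0)
      = if ∀ p : ℕ, p.Prime → p ∣ n → p ∣ q then 1 else 0 := by
  have h1 : ∑ d ∈ n.divisors, (if Nat.gcd d q = 1 then (moebius d : ℤ) else 0)
      = ∑ d ∈ n.divisors with Squarefree d, (if Nat.gcd d q = 1 then (moebius d : ℤ) else 0) := by
    rw [Finset.sum_filter_of_ne]
    intro d _ hd
    by_contra hsq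
    simp [ArithmeticFunction.moebius_eq_zero_of_not_squarefree hsq] at hd
  rw [h1, Nat.sum_divisors_filter_squarefree hn, Nat.factors_eq]
  have hPF : (n.primeFactorsList : Multiset ℕ).toFinset = n.primeFactors := rfl
  rw [hPF]
  set P' : Finset ℕ := n.primeFactors.filter (fun p => ¬ p ∣ q) with hP'
  have h2 : ∀ t ∈ n.primeFactors.powerset,
      (if Nat.gcd (t.val.prod) q = 1 then (moebius (t.val.prod) : ℤ) else 0)
        = if t ⊆ P' then (-1 : ℤ) ^ t.card else 0 := by
    intro t ht
    rw [Finset.mem_powerset] at ht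
    have hprime : ∀ p ∈ t, p.Prime := fun p hp =>
      Nat.prime_of_mem_primeFactors (ht hp)
    have hprod : t.val.prod = ∏ p ∈ t, p := (Finset.prod_val t).symm ▸ rfl
    have hcop : Nat.gcd (t.val.prod) q = 1 ↔ t ⊆ P' := by
      rw [hprod]
      rw [show (Nat.gcd (∏ p ∈ t, p) q = 1) ↔ Nat.Coprime (∏ p ∈ t, p) q from Iff.rfl,
        Nat.coprime_prod_left_iff]
      constructor
      · intro h p hp
        rw [hP', Finset.mem_filter]
        exact ⟨ht hp, fun hdvd => ((hprime p hp).coprime_iff_not_dvd.mp (h p hp)) hdvd⟩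
      · intro h p hp
        have := h hp
        rw [hP', Finset.mem_filter] at this
        exact (hprime p hp).coprime_iff_not_dvd.mpr this.2
    by_cases hc : t ⊆ P'
    · rw [if_pos (hcop.mpr hc), if_pos hc, hprod]
      rw [ArithmeticFunction.IsMultiplicative.map_prod_of_prime
        ArithmeticFunction.isMultiplicative_moebius t hprime,
        Finset.prod_congr rfl (fun p hp => moebius_apply_prime (hprime p hp))]
      simp
    · rw [if_neg (fun h => hc (hcop.mp h)), if_neg hc]
  rw [Finset.sum_congr rfl h2]
  rw [Finset.sum_ite, Finset.sum_const_zero, add_zero]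
  have h3 : n.primeFactors.powerset.filter (fun t => t ⊆ P') = P'.powerset := by
    ext t
    simp only [Finset.mem_filter, Finset.mem_powerset]
    exact ⟨fun h => h.2, fun h => ⟨h.trans (Finset.filter_subset _ _), h⟩⟩
  rw [h3, Finset.sum_powerset_neg_one_pow_card]
  have h4 : (P' = ∅) ↔ (∀ p : ℕ, p.Prime → p ∣ n → p ∣ q) := by
    rw [hP', Finset.filter_eq_empty_iff]
    constructor
    · intro h p hp hpn
      by_contra hpq
      exact h (Nat.mem_primeFactors.mpr ⟨hp, hpn, hn⟩) hpq
    · intro h p hp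
      have := Nat.mem_primeFactors.mp hp
      simp only [not_not]
      exact h p this.1 this.2.1
  simp only [h4]

lemma gR_eq (q : ℕ) (n : ℕ) (hn : n ≠ 0) :
    ∑ d ∈ n.divisors, (if Nat.gcd d q = 1 then (moebius d : ℝ) else 0)
      = if ∀ p : ℕ, p.Prime → p ∣ n → p ∣ q then 1 else 0 := by
  exact_mod_cast congrArg (Int.cast : ℤ → ℝ) (g_eq q n hn)

lemma G1_eq (q : ℕ) (n : ℕ) (hn : n ≠ 0) :
    ∑ d ∈ n.divisors, (if Nat.gcd d q = 1 then (moebius d : ℝ) else 0) * (-1) ^ (n / d + 1)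
      = (if ∀ p : ℕ, p.Prime → p ∣ n → p ∣ q then (1:ℝ) else 0)
        - (if 2 ∣ n then (if ∀ p : ℕ, p.Prime → p ∣ (n/2) → p ∣ q then (2:ℝ) else 0) else 0) := by
  have key : ∀ d ∈ n.divisors,
      (if Nat.gcd d q = 1 then (moebius d : ℝ) else 0) * (-1) ^ (n / d + 1)
        = (if Nat.gcd d q = 1 then (moebius d : ℝ) else 0)
          - (if 2 ∣ n / d then 2 * (if Nat.gcd d q = 1 then (moebius d : ℝ) else 0) else 0) := by
    intro d _
    by_cases h2 : 2 ∣ n / d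
    · have he : Even (n / d) := Nat.even_iff.mpr (by omega)
      rw [Even.add_one he |>.neg_one_pow, if_pos h2]; ring
    · have ho : Odd (n / d) := Nat.odd_iff.mpr (by omega)
      rw [Odd.add_one ho |>.neg_one_pow, if_neg h2]; ring
  rw [Finset.sum_congr rfl key, Finset.sum_sub_distrib, gR_eq q n hn]
  congr 1
  rw [← Finset.sum_filter]
  by_cases h2n : 2 ∣ n
  · rw [if_pos h2n]
    have hfil : n.divisors.filter (fun d => 2 ∣ n / d) = (n / 2).divisors := by
      ext d
      simp only [Finset.mem_filter, Nat.mem_divisors]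
      constructor
      · rintro ⟨⟨⟨c, rfl⟩, -⟩, h2d⟩
        have hd0 : 0 < d := Nat.pos_of_ne_zero (by rintro rfl; simp at hn)
        rw [Nat.mul_div_cancel_left c hd0] at h2d
        obtain ⟨k, rfl⟩ := h2d
        have hdc : d * (2 * k) / 2 = d * k := by
          rw [show d * (2 * k) = d * k * 2 by ring]
          exact Nat.mul_div_cancel _ two_pos
        exact ⟨⟨k, hdc.symm ▸ rfl⟩, by omega⟩
      · rintro ⟨⟨k, hk⟩, h20⟩
        have hn2 : n = 2 * (d * k) := by omega
        have hd0 : 0 < d := Nat.pos_of_ne_zero (by rintro rfl; simp at hk; omega)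
        have hnd : n / d = 2 * k := by
          rw [hn2, show 2 * (d * k) = d * (2 * k) by ring, Nat.mul_div_cancel_left _ hd0]
        exact ⟨⟨⟨2 * k, by rw [hn2]; ring⟩, hn⟩, ⟨k, hnd⟩⟩
    rw [hfil, ← Finset.mul_sum, gR_eq q (n / 2) (by omega)]
    split <;> ring
  · rw [if_neg h2n]
    have hfil : n.divisors.filter (fun d => 2 ∣ n / d) = ∅ := by
      rw [Finset.filter_eq_empty_iff]
      intro d hd
      rw [Nat.mem_divisors] at hd
      obtain ⟨⟨c, rfl⟩, -⟩ := hd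
      have hd0 : 0 < d := Nat.pos_of_ne_zero (by rintro rfl; simp at hn)
      rw [Nat.mul_div_cancel_left c hd0]
      exact fun h2 => h2n (h2.mul_left d)
    rw [hfil, Finset.sum_empty]

lemma main_nat (q : ℕ) (N : ℕ) :
    ∑ n ∈ Finset.Icc 1 N,
        ((∑ d ∈ n.divisors,
          (if Nat.gcd d q = 1 then (moebius d : ℝ) else 0) * (-1) ^ (n / d + 1)) / n)
      = ∑ ℓ ∈ Finset.Ioc (N / 2) N,
          (if ∀ p : ℕ, p.Prime → p ∣ ℓ → p ∣ q then (1 : ℝ) / ℓ else 0) := by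
  induction N with
  | zero => simp
  | succ N ih =>
    rw [Finset.sum_Icc_succ_top (by omega : 1 ≤ N + 1), ih, G1_eq q (N + 1) (by omega)]
    by_cases h2 : 2 ∣ (N + 1)
    · have h2' := h2
      obtain ⟨m, hm⟩ := h2'
      have hm1 : 1 ≤ m := by omega
      have hhalf : (N + 1) / 2 = m := by omega
      have hhalf' : N / 2 = m - 1 := by omega
      rw [if_pos h2, hhalf, hhalf',
        Finset.sum_Ioc_succ_top (show m ≤ N by omega),
        ← Finset.sum_Ioc_consecutive _ (show m - 1 ≤ m by omega) (show m ≤ N by omega),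
        show Finset.Ioc (m - 1) m = {m} by
          ext x; simp only [Finset.mem_Ioc, Finset.mem_singleton]; omega,
        Finset.sum_singleton]
      have hNm : ((N : ℝ) + 1) = 2 * m := by exact_mod_cast congrArg (Nat.cast (R := ℝ)) hm
      have hm0 : (m : ℝ) ≠ 0 := by positivity
      push_cast
      rw [hNm]
      split_ifs <;> field_simp <;> ring
    · have hhalf : (N + 1) / 2 = N / 2 := by omega
      rw [if_neg h2, sub_zero, hhalf, Finset.sum_Ioc_succ_top (show N / 2 ≤ N by omega)]
      have hN0 : ((N : ℝ) + 1) ≠ 0 := by positivity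
      push_cast
      split_ifs <;> field_simp <;> ring

theorem G1_partial_sum (q : ℕ) (hq : 0 < q) (X : ℝ) (hX : 0 < X) :
    ∑ n ∈ Finset.Icc 1 ⌊X⌋₊,
        ((∑ d ∈ n.divisors,
          (if Nat.gcd d q = 1 then (ArithmeticFunction.moebius d : ℝ) else 0)
            * (-1) ^ (n / d + 1)) / n)
      = ∑ ℓ ∈ Finset.Ioc ⌊X / 2⌋₊ ⌊X⌋₊,
          (if ∀ p : ℕ, p.Prime → p ∣ ℓ → p ∣ q then (1 : ℝ) / ℓ else 0) := by
  have h : ⌊X / 2⌋₊ = ⌊X⌋₊ / 2 := by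
    rw [show (2 : ℝ) = ((2 : ℕ) : ℝ) by norm_num, Nat.floor_div_natCast]
  rw [h]
  exact main_nat q ⌊X⌋₊
end

section
/- For complex s with Re s = σ > 0 and real X > 0, |∑_{n ≤ X} (−1)^{n+1}/n^s − C(s)| ≤ (σ + |s|)/(σ X^σ), where C(s) = (1 − 2^{1−s})ζ(s) (with C(1) = log 2). -/
open Finset

section AuxAlternating

open Filter Complex Set Metric Topology Finset

lemma s_ne_zero {s : ℂ} (hs : 0 < s.re) : s ≠ 0 := fun h => by simp [h] at hs

lemma cpow_deriv {s : ℂ} (hs : 0 < s.re) {x : ℝ} (hx : 0 < x) :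
    HasDerivAt (fun t : ℝ => (t:ℂ) ^ (-s)) (-s * (x:ℂ) ^ (-s-1)) x := by
  have hr : (-s-1 : ℂ) ≠ -1 := by
    intro h
    apply s_ne_zero hs
    linear_combination -h - 1
  have h := (hasDerivAt_ofReal_cpow_const' hx.ne' hr).const_mul (-s)
  have he : (fun y : ℝ => -s * ((y:ℂ) ^ (-s-1+1) / (-s-1+1))) = fun y : ℝ => (y:ℂ) ^ (-s) := by
    funext y
    have : (-s-1+1 : ℂ) = -s := by ring
    rw [this]
    rw [mul_div_assoc']
    rw [mul_div_cancel_left₀ _ (neg_ne_zero.mpr (s_ne_zero hs))]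
  rw [he] at h
  exact h

lemma key_integral {s : ℂ} (hs : 0 < s.re) {a b : ℝ} (ha : 0 < a) (hab : a ≤ b) :
    (b:ℂ)^(-s) - (a:ℂ)^(-s) = ∫ t in a..b, (-s) * (t:ℂ)^(-s-1) := by
  have hderiv : ∀ x ∈ Set.uIcc a b, HasDerivAt (fun t : ℝ => (t:ℂ) ^ (-s)) (-s * (x:ℂ) ^ (-s-1)) x := by
    intro x hx
    rw [Set.uIcc_of_le hab] at hx
    exact cpow_deriv hs (lt_of_lt_of_le ha hx.1)
  have hcont : ContinuousOn (fun x : ℝ => -s * (x:ℂ)^(-s-1)) (Set.uIcc a b) := by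
    apply ContinuousOn.mul continuousOn_const
    intro x hx
    rw [Set.uIcc_of_le hab] at hx
    have hx0 : 0 < x := lt_of_lt_of_le ha hx.1
    apply ContinuousAt.continuousWithinAt
    apply ContinuousAt.cpow (Complex.continuous_ofReal.continuousAt) continuousAt_const
    exact Or.inl (by simpa using hx0)
  refine (intervalIntegral.integral_eq_sub_of_hasDerivAt hderiv ?_).symm
  rw [Set.uIcc_of_le hab] at hcont
  exact hcont.intervalIntegrable_of_Icc hab

lemma norm_integrand {s : ℂ} {t : ℝ} (ht : 0 < t) :
    ‖(-s) * (t:ℂ)^(-s-1)‖ = ‖s‖ * t ^ (-s.re-1) := by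
  rw [norm_mul, norm_neg,
    Complex.norm_cpow_eq_rpow_re_of_pos ht]
  norm_num

lemma norm_cpow_sub_le_sharp {s : ℂ} (hs : 0 < s.re) {a b : ℝ} (ha : 0 < a) (hab : a ≤ b) :
    ‖(a:ℂ)^(-s) - (b:ℂ)^(-s)‖ ≤ (‖s‖ / s.re) * (a ^ (-s.re) - b ^ (-s.re)) := by
  rw [norm_sub_rev, key_integral hs ha hab]
  calc ‖∫ t in a..b, (-s) * (t:ℂ)^(-s-1)‖
      ≤ ∫ t in a..b, ‖(-s) * (t:ℂ)^(-s-1)‖ := intervalIntegral.norm_integral_le_integral_norm hab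
    _ = ∫ t in a..b, ‖s‖ * t ^ (-s.re-1) := by
        apply intervalIntegral.integral_congr
        intro t ht
        rw [Set.uIcc_of_le hab] at ht
        exact norm_integrand (lt_of_lt_of_le ha ht.1)
    _ = ‖s‖ * ∫ t in a..b, t ^ (-s.re-1) := by
        rw [intervalIntegral.integral_const_mul]
    _ = (‖s‖ / s.re) * (a ^ (-s.re) - b ^ (-s.re)) := by
        rw [integral_rpow (Or.inr ⟨by intro h; nlinarith [hs],
          by rw [Set.uIcc_of_le hab]; intro h0; exact absurd (h0.1) (not_le.mpr ha)⟩)]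
        have h1 : (-s.re - 1 + 1) = -s.re := by ring
        rw [h1, div_neg, mul_neg, ← mul_neg, ← neg_div, neg_sub, mul_div_assoc',
          div_mul_eq_mul_div]

lemma norm_cpow_sub_le_crude {s : ℂ} (hs : 0 < s.re) {a b : ℝ} (ha : 0 < a) (hab : a ≤ b) :
    ‖(a:ℂ)^(-s) - (b:ℂ)^(-s)‖ ≤ ‖s‖ * a ^ (-s.re-1) * (b - a) := by
  rw [norm_sub_rev, key_integral hs ha hab]
  have := intervalIntegral.norm_integral_le_of_norm_le_const
    (C := ‖s‖ * a ^ (-s.re-1)) (a := a) (b := b) (f := fun t : ℝ => (-s) * (t:ℂ)^(-s-1)) ?_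
  · calc ‖∫ t in a..b, (-s) * (t:ℂ)^(-s-1)‖ ≤ ‖s‖ * a ^ (-s.re-1) * |b - a| := this
      _ = ‖s‖ * a ^ (-s.re-1) * (b - a) := by
          rw [_root_.abs_of_nonneg (show (0:ℝ) ≤ b - a by linarith)]
  · intro x hx
    rw [Set.uIoc_of_le hab] at hx
    rw [norm_integrand (lt_trans ha hx.1)]
    have h2 : x ^ (-s.re-1) ≤ a ^ (-s.re-1) :=
      Real.rpow_le_rpow_of_nonpos ha hx.1.le (by linarith)
    exact mul_le_mul_of_nonneg_left h2 (norm_nonneg s)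

noncomputable def aterm (s : ℂ) (k : ℕ) : ℂ :=
  (((2*k+1 : ℕ) : ℝ) : ℂ)^(-s) - (((2*k+2 : ℕ) : ℝ) : ℂ)^(-s)

noncomputable def vv (σ : ℝ) (k : ℕ) : ℝ := ((2*k+1 : ℕ) : ℝ) ^ (-σ)
noncomputable def ww (σ : ℝ) (k : ℕ) : ℝ := ((2*k+2 : ℕ) : ℝ) ^ (-σ)

lemma cast_pos1 (k : ℕ) : (0:ℝ) < ((2*k+1 : ℕ) : ℝ) := by positivity
lemma cast_le12 (k : ℕ) : ((2*k+1 : ℕ) : ℝ) ≤ ((2*k+2 : ℕ) : ℝ) := by push_cast; linarith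

lemma ww_ge_vv_succ {σ : ℝ} (hσ : 0 < σ) (k : ℕ) : vv σ (k+1) ≤ ww σ k := by
  apply Real.rpow_le_rpow_of_nonpos (by positivity) (by push_cast; linarith) (by linarith)

lemma vv_sub_ww_nonneg {σ : ℝ} (hσ : 0 < σ) (k : ℕ) : 0 ≤ vv σ k - ww σ k := by
  have := Real.rpow_le_rpow_of_nonpos (cast_pos1 k) (cast_le12 k) (show -σ ≤ 0 by linarith)
  simpa [vv, ww] using this

lemma norm_aterm_le_sharp {s : ℂ} (hs : 0 < s.re) (k : ℕ) :
    ‖aterm s k‖ ≤ (‖s‖ / s.re) * (vv s.re k - ww s.re k) :=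
  norm_cpow_sub_le_sharp hs (cast_pos1 k) (cast_le12 k)

lemma norm_aterm_le_crude {s : ℂ} (hs : 0 < s.re) (k : ℕ) :
    ‖aterm s k‖ ≤ ‖s‖ * ((2*k+1 : ℕ) : ℝ) ^ (-s.re-1) := by
  have h := norm_cpow_sub_le_crude hs (cast_pos1 k) (cast_le12 k)
  calc ‖aterm s k‖ ≤ ‖s‖ * ((2*k+1 : ℕ) : ℝ) ^ (-s.re-1)
        * (((2*k+2 : ℕ) : ℝ) - ((2*k+1 : ℕ) : ℝ)) := h
    _ = ‖s‖ * ((2*k+1 : ℕ) : ℝ) ^ (-s.re-1) := by push_cast; ring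

lemma sum_vv_sub_ww_le {σ : ℝ} (hσ : 0 < σ) (m n : ℕ) :
    ∑ k ∈ Finset.range n, (vv σ (k+m) - ww σ (k+m)) ≤ vv σ m := by
  have h1 : ∑ k ∈ Finset.range n, (vv σ (k+m) - ww σ (k+m))
      ≤ ∑ k ∈ Finset.range n, (vv σ (k+m) - vv σ (k+1+m)) := by
    apply Finset.sum_le_sum
    intro k _
    have := ww_ge_vv_succ hσ (k+m)
    have he : k + m + 1 = k + 1 + m := by ring
    rw [he] at this
    linarith
  have h2 : ∑ k ∈ Finset.range n, (vv σ (k+m) - vv σ (k+1+m)) = vv σ m - vv σ (n+m) := by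
    simpa using Finset.sum_range_sub' (fun k => vv σ (k+m)) n
  have h3 : 0 ≤ vv σ (n+m) := by unfold vv; positivity
  linarith

lemma summable_vv_sub_ww {σ : ℝ} (hσ : 0 < σ) :
    Summable (fun k => vv σ k - ww σ k) := by
  apply summable_of_sum_range_le (c := vv σ 0) (fun k => vv_sub_ww_nonneg hσ k)
  intro n
  simpa using sum_vv_sub_ww_le hσ 0 n

lemma summable_aterm {s : ℂ} (hs : 0 < s.re) : Summable (aterm s) := by
  apply Summable.of_norm_bounded ((summable_vv_sub_ww hs).mul_left (‖s‖ / s.re))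
  exact norm_aterm_le_sharp hs

lemma tail_bound {s : ℂ} (hs : 0 < s.re) (m : ℕ) :
    ‖∑' k : ℕ, aterm s (k+m)‖ ≤ (‖s‖ / s.re) * vv s.re m := by
  have hsum : Summable (fun k => aterm s (k+m)) := (summable_aterm hs).comp_injective
    (add_left_injective m)
  have hb : Summable (fun k => (‖s‖ / s.re) * (vv s.re (k+m) - ww s.re (k+m))) :=
    (((summable_vv_sub_ww hs).comp_injective (add_left_injective m)).mul_left _)
  calc ‖∑' k : ℕ, aterm s (k+m)‖
      ≤ ∑' k : ℕ, ‖aterm s (k+m)‖ := by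
        exact norm_tsum_le_tsum_norm (summable_norm_iff.mpr hsum)
    _ ≤ ∑' k : ℕ, (‖s‖ / s.re) * (vv s.re (k+m) - ww s.re (k+m)) := by
        exact Summable.tsum_le_tsum (fun k => norm_aterm_le_sharp hs (k+m)) (summable_norm_iff.mpr hsum) hb
    _ = (‖s‖ / s.re) * ∑' k : ℕ, (vv s.re (k+m) - ww s.re (k+m)) := by
        rw [tsum_mul_left]
    _ ≤ (‖s‖ / s.re) * vv s.re m := by
        apply mul_le_mul_of_nonneg_left _ (by positivity)
        apply Summable.tsum_le_of_sum_le ((summable_vv_sub_ww hs).comp_injective (add_left_injective m))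
        intro F
        obtain ⟨n, hn⟩ := F.exists_nat_subset_range
        calc ∑ k ∈ F, (vv s.re (k+m) - ww s.re (k+m))
            ≤ ∑ k ∈ Finset.range n, (vv s.re (k+m) - ww s.re (k+m)) :=
              Finset.sum_le_sum_of_subset_of_nonneg hn (fun k _ _ => vv_sub_ww_nonneg hs (k+m))
          _ ≤ vv s.re m := sum_vv_sub_ww_le hs m n

lemma etaF_eq_of_one_lt {s : ℂ} (hs : 1 < s.re) :
    ∑' k, aterm s k = (1 - 2^(1-s : ℂ)) * riemannZeta s := by
  have hs0 : s ≠ 0 := by intro h; rw [h] at hs; simp at hs; linarith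
  set h : ℕ → ℂ := fun n => 1/(n:ℂ)^s with hh
  have hsum : Summable h := Complex.summable_one_div_nat_cpow.mpr hs
  have hsum_even : Summable (fun k => h (2*k)) :=
    hsum.comp_injective (mul_right_injective₀ two_ne_zero)
  have hsum_odd : Summable (fun k => h (2*k+1)) :=
    hsum.comp_injective (fun a b hab => by omega)
  have hsum_even2 : Summable (fun k => h (2*k+2)) :=
    hsum.comp_injective (fun a b hab => by omega)
  have hE : ∑' k, h (2*k) = (2:ℂ)^(-s) * riemannZeta s := by
    have hc : ∀ k : ℕ, h (2*k) = (2:ℂ)^(-s) * h k := by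
      intro k
      simp only [hh]
      rcases Nat.eq_zero_or_pos k with rfl|hk
      · simp [zero_cpow hs0]
      · have h2 : ((2*k:ℕ):ℂ) = ((2:ℝ):ℂ) * ((k:ℝ):ℂ) := by push_cast; ring
        rw [h2, Complex.mul_cpow_ofReal_nonneg (by norm_num) (k.cast_nonneg), cpow_neg]
        have : ((2:ℝ):ℂ) = (2:ℂ) := by norm_num
        rw [this]
        push_cast
        field_simp
    rw [tsum_congr hc, tsum_mul_left, ← zeta_eq_tsum_one_div_nat_cpow hs]
  have hEO : (∑' k, h (2*k)) + (∑' k, h (2*k+1)) = riemannZeta s := by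
    rw [← (hsum_even.hasSum.even_add_odd hsum_odd.hasSum).tsum_eq,
      ← zeta_eq_tsum_one_div_nat_cpow hs]
  have hE2 : ∑' k, h (2*k+2) = ∑' k, h (2*k) := by
    have := Summable.tsum_eq_zero_add hsum_even
    have h0 : h (2*0) = 0 := by simp [hh, zero_cpow hs0]
    simp only [Nat.mul_zero, h0, zero_add] at this
    rw [this]
    apply tsum_congr
    intro k
    have he : 2*(k+1) = 2*k+2 := by ring
    rw [he]
  have hat : ∀ k, aterm s k = h (2*k+1) - h (2*k+2) := by
    intro k
    simp only [aterm, hh, cpow_neg]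
    push_cast
    rw [one_div, one_div]
  rw [tsum_congr hat, Summable.tsum_sub hsum_odd hsum_even2, hE2]
  have h21 : (2:ℂ)^(1-s) = 2 * (2:ℂ)^(-s) := by
    rw [show (1-s : ℂ) = 1 + (-s) by ring, cpow_add _ _ (two_ne_zero), cpow_one]
  rw [h21]
  have hO : ∑' k, h (2*k+1) = riemannZeta s - (2:ℂ)^(-s) * riemannZeta s := by
    rw [← hE]; linear_combination hEO
  rw [hO, hE]
  ring

lemma summable_crude {σ₀ : ℝ} (hσ : 0 < σ₀) (R : ℝ) :
    Summable (fun k : ℕ => R * ((2*k+1 : ℕ) : ℝ) ^ (-σ₀-1)) := by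
  apply Summable.mul_left
  have h1 : Summable (fun k : ℕ => ((k+1 : ℕ) : ℝ) ^ (-σ₀-1)) := by
    have := (Real.summable_nat_rpow (p := -σ₀-1)).mpr (by linarith)
    exact this.comp_injective Nat.succ_injective
  apply Summable.of_nonneg_of_le (fun k => by positivity) _ h1
  intro k
  apply Real.rpow_le_rpow_of_nonpos (by positivity) (by push_cast; linarith) (by linarith)

lemma differentiableAt_etaF {s₀ : ℂ} (hs : 0 < s₀.re) :
    DifferentiableAt ℂ (fun z => ∑' k, aterm z k) s₀ := by
  set r : ℝ := s₀.re / 2 with hr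
  have hr0 : 0 < r := by positivity
  have hball : ∀ z ∈ ball s₀ r, r < z.re ∧ ‖z‖ < ‖s₀‖ + r := by
    intro z hz
    rw [mem_ball, Complex.dist_eq] at hz
    constructor
    · have := Complex.abs_re_le_norm (z - s₀)
      have h2 : |z.re - s₀.re| ≤ ‖z - s₀‖ := by
        simpa using Complex.abs_re_le_norm (z - s₀)
      rw [abs_le] at h2
      have := h2.1
      simp only [hr]
      linarith [hz]
    · calc ‖z‖ = ‖s₀ + (z - s₀)‖ := by ring_nf
        _ ≤ ‖s₀‖ + ‖z - s₀‖ := norm_add_le _ _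
        _ < ‖s₀‖ + r := by linarith
  have hdiff : DifferentiableOn ℂ (fun z => ∑' k, aterm z k) (ball s₀ r) := by
    apply differentiableOn_tsum_of_summable_norm (u := fun k : ℕ =>
      (‖s₀‖ + r) * ((2*k+1 : ℕ) : ℝ) ^ (-r-1)) (summable_crude hr0 _)
    · intro k
      apply DifferentiableOn.sub <;>
      · apply Differentiable.differentiableOn
        apply Differentiable.const_cpow (differentiable_id.neg)
        left
        simp only [ne_eq, Complex.ofReal_eq_zero, Nat.cast_eq_zero]
        positivity
    · exact isOpen_ball
    · intro k w hw
      obtain ⟨h1, h2⟩ := hball w hw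
      have hw0 : 0 < w.re := lt_trans hr0 h1
      calc ‖aterm w k‖ ≤ ‖w‖ * ((2*k+1 : ℕ) : ℝ) ^ (-w.re-1) :=
            norm_aterm_le_crude hw0 k
        _ ≤ (‖s₀‖ + r) * ((2*k+1 : ℕ) : ℝ) ^ (-r-1) := by
            apply mul_le_mul h2.le _ (by positivity) (by positivity)
            apply Real.rpow_le_rpow_of_exponent_le (by push_cast; linarith) (by linarith)
  exact hdiff.differentiableAt (isOpen_ball.mem_nhds (mem_ball_self hr0))

lemma etaF_eq {s : ℂ} (hs : 0 < s.re) (hs1 : s ≠ 1) :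
    ∑' k, aterm s k = (1 - 2^(1-s : ℂ)) * riemannZeta s := by
  set U : Set ℂ := {z | 0 < z.re ∧ z ≠ 1} with hU
  have hUo : IsOpen U := by
    have : U = (Complex.re ⁻¹' Set.Ioi 0) ∩ {(1:ℂ)}ᶜ := by
      ext z; simp [hU, Set.mem_setOf_eq, and_comm]
    rw [this]
    exact (Complex.continuous_re.isOpen_preimage _ isOpen_Ioi).inter isOpen_compl_singleton
  have hUp : IsPreconnected U := by
    set C₁ : Set ℂ := {z | 0 < z.re ∧ z.re < 1} with hC1
    set C₂ : Set ℂ := {z | 1 < z.re} with hC2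
    set C₃ : Set ℂ := {z | 0 < z.re ∧ 0 < z.im} with hC3
    set C₄ : Set ℂ := {z | 0 < z.re ∧ z.im < 0} with hC4
    have p1 : IsPreconnected C₁ :=
      ((convex_halfSpace_re_gt 0).inter (convex_halfSpace_re_lt 1)).isPreconnected
    have p2 : IsPreconnected C₂ := (convex_halfSpace_re_gt 1).isPreconnected
    have p3 : IsPreconnected C₃ :=
      ((convex_halfSpace_re_gt 0).inter (convex_halfSpace_im_gt 0)).isPreconnected
    have p4 : IsPreconnected C₄ :=
      ((convex_halfSpace_re_gt 0).inter (convex_halfSpace_im_lt 0)).isPreconnected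
    have pA : IsPreconnected (C₃ ∪ C₁) := by
      apply IsPreconnected.union (⟨1/2, 1/2⟩ : ℂ) _ _ p3 p1
      · constructor <;> norm_num
      · constructor <;> norm_num
    have pB : IsPreconnected ((C₃ ∪ C₁) ∪ C₂) := by
      apply IsPreconnected.union (⟨2, 1⟩ : ℂ) _ _ pA p2
      · left; constructor <;> norm_num
      · norm_num [hC2]
    have pC : IsPreconnected (((C₃ ∪ C₁) ∪ C₂) ∪ C₄) := by
      apply IsPreconnected.union (⟨1/2, -1/2⟩ : ℂ) _ _ pB p4
      · left; right; constructor <;> norm_num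
      · constructor <;> norm_num
    have hUeq : U = ((C₃ ∪ C₁) ∪ C₂) ∪ C₄ := by
      ext z
      simp only [hU, hC1, hC2, hC3, hC4, Set.mem_union, Set.mem_setOf_eq]
      constructor
      · rintro ⟨hre, hne⟩
        rcases lt_trichotomy z.im 0 with him|him|him
        · right; exact ⟨hre, him⟩
        · rcases lt_trichotomy z.re 1 with h1|h1|h1
          · left; left; right; exact ⟨hre, h1⟩
          · exfalso; apply hne; exact Complex.ext h1 him
          · left; right; exact h1
        · left; left; left; exact ⟨hre, him⟩
      · rintro (((⟨h1,h2⟩|⟨h1,h2⟩)|h1)|⟨h1,h2⟩)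
        · exact ⟨h1, fun h => by rw [h] at h2; simp at h2⟩
        · exact ⟨h1, fun h => by rw [h] at h2; simp at h2⟩
        · exact ⟨by linarith, fun h => by rw [h] at h1; simp at h1⟩
        · exact ⟨h1, fun h => by rw [h] at h2; simp at h2⟩
    rw [hUeq]
    exact pC
  have hf : AnalyticOnNhd ℂ (fun z => ∑' k, aterm z k) U :=
    DifferentiableOn.analyticOnNhd
      (fun z hz => (differentiableAt_etaF hz.1).differentiableWithinAt) hUo
  have hg : AnalyticOnNhd ℂ (fun z => (1 - 2^(1-z : ℂ)) * riemannZeta z) U := by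
    apply DifferentiableOn.analyticOnNhd _ hUo
    intro z hz
    apply DifferentiableAt.differentiableWithinAt
    apply DifferentiableAt.mul _ (differentiableAt_riemannZeta hz.2)
    apply DifferentiableAt.sub (differentiableAt_const _)
    exact ((differentiableAt_const _).sub differentiableAt_id).const_cpow (Or.inl two_ne_zero)
  have h2U : (2:ℂ) ∈ U := ⟨by norm_num, by norm_num⟩
  have hV : {z : ℂ | 1 < z.re} ∈ 𝓝 (2:ℂ) :=
    (Complex.continuous_re.isOpen_preimage _ isOpen_Ioi).mem_nhds (by norm_num)
  have hev : (fun z => ∑' k, aterm z k) =ᶠ[𝓝 (2:ℂ)] (fun z => (1 - 2^(1-z : ℂ)) * riemannZeta z) :=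
    eventually_of_mem hV fun z hz => etaF_eq_of_one_lt hz
  exact hf.eqOn_of_preconnected_of_eventuallyEq hg hUp h2U hev ⟨hs, hs1⟩

lemma alt_partial_eq_harmonic (n : ℕ) :
    ∑ k ∈ Finset.range n, ((1:ℝ)/(2*k+1) - 1/(2*k+2)) =
      (harmonic (2*n) : ℝ) - (harmonic n : ℝ) := by
  induction n with
  | zero => simp
  | succ n ih =>
    rw [Finset.sum_range_succ, ih]
    have h1 : 2*(n+1) = (2*n+1)+1 := by ring
    rw [h1, harmonic_succ, harmonic_succ, harmonic_succ]
    push_cast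
    field_simp
    ring

lemma tendsto_alt_harmonic :
    Tendsto (fun n : ℕ => (harmonic (2*n) : ℝ) - (harmonic n : ℝ)) atTop
      (𝓝 (Real.log 2)) := by
  have h2n : Tendsto (fun n : ℕ => 2*n) atTop atTop :=
    Filter.tendsto_atTop_mono
      (fun n => by simpa using Nat.le_mul_of_pos_left n (by norm_num : 0 < 2)) tendsto_id
  have h1 := Real.tendsto_harmonic_sub_log
  have h2 := h1.comp h2n
  have h3 := (h2.sub h1).add_const (Real.log 2)
  rw [sub_self, zero_add] at h3
  apply h3.congr'
  filter_upwards [eventually_ge_atTop 1] with n hn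
  have hn0 : (0:ℝ) < n := by exact_mod_cast hn
  have hlog : Real.log ((2*n : ℕ) : ℝ) = Real.log 2 + Real.log n := by
    push_cast
    rw [Real.log_mul (by norm_num) (ne_of_gt hn0)]
  simp only [Function.comp]
  rw [hlog]
  ring

lemma summable_alt : Summable (fun k : ℕ => (1:ℝ)/(2*k+1) - 1/(2*k+2)) := by
  have h1 : Summable (fun k : ℕ => (1:ℝ)/((k+1:ℕ))^2) := by
    have := Real.summable_one_div_nat_pow.mpr (le_refl 2)
    exact this.comp_injective Nat.succ_injective
  apply Summable.of_nonneg_of_le _ _ h1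
  · intro k
    have hk : (0:ℝ) ≤ k := k.cast_nonneg
    rw [sub_nonneg]
    apply div_le_div_of_nonneg_left (by norm_num) (by linarith) (by linarith)
  · intro k
    have hk : (0:ℝ) ≤ k := k.cast_nonneg
    have he : (1:ℝ)/(2*k+1) - 1/(2*k+2) = 1/((2*k+1)*(2*k+2)) := by
      field_simp
      ring
    rw [he]
    apply div_le_div_of_nonneg_left (by norm_num) (by positivity)
    push_cast
    nlinarith

lemma hasSum_alt : HasSum (fun k : ℕ => (1:ℝ)/(2*k+1) - 1/(2*k+2)) (Real.log 2) := by
  rw [summable_alt.hasSum_iff_tendsto_nat]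
  have := tendsto_alt_harmonic
  apply this.congr
  intro n
  exact (alt_partial_eq_harmonic n).symm

lemma etaF_one : ∑' k, aterm 1 k = (Real.log 2 : ℂ) := by
  have h1 : ∀ k : ℕ, aterm 1 k = (((1:ℝ)/(2*k+1) - 1/(2*k+2) : ℝ) : ℂ) := by
    intro k
    simp only [aterm, Complex.cpow_neg_one]
    push_cast
    ring
  have h2 : HasSum (fun k : ℕ => (((1:ℝ)/(2*k+1) - 1/(2*k+2) : ℝ) : ℂ)) ((Real.log 2 : ℝ) : ℂ) :=
    Complex.ofRealCLM.hasSum hasSum_alt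
  rw [tsum_congr h1, h2.tsum_eq]

lemma aterm_eq (s : ℂ) (k : ℕ) :
    aterm s k = 1/((2*k+1 : ℕ) : ℂ)^s - 1/((2*k+2 : ℕ) : ℂ)^s := by
  simp only [aterm, Complex.cpow_neg, one_div, Complex.ofReal_natCast]

lemma even_partial (s : ℂ) (m : ℕ) :
    ∑ n ∈ Finset.Icc 1 (2*m), (-1 : ℂ) ^ (n + 1) / (n : ℂ) ^ s =
      ∑ k ∈ Finset.range m, aterm s k := by
  induction m with
  | zero => simp
  | succ m ih =>
    have h1 : 2*(m+1) = (2*m+1)+1 := by ring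
    rw [h1, Finset.sum_Icc_succ_top (by omega), Finset.sum_Icc_succ_top (by omega), ih,
      Finset.sum_range_succ, aterm_eq]
    have he : (-1 : ℂ) ^ (2*m+1+1+1) = -1 := Odd.neg_one_pow ⟨m+1, by ring⟩
    have ho : (-1 : ℂ) ^ (2*m+1+1) = 1 := Even.neg_one_pow ⟨m+1, by ring⟩
    rw [he, ho]
    have hc : ((2*m+1+1 : ℕ) : ℂ) = ((2*m+2 : ℕ) : ℂ) := by push_cast; ring
    rw [hc]
    push_cast
    ring

lemma odd_partial (s : ℂ) (m : ℕ) :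
    ∑ n ∈ Finset.Icc 1 (2*m+1), (-1 : ℂ) ^ (n + 1) / (n : ℂ) ^ s =
      (∑ k ∈ Finset.range (m+1), aterm s k) + 1/((2*m+2 : ℕ) : ℂ)^s := by
  have h2 : 2*(m+1) = (2*m+1)+1 := by ring
  have := even_partial s (m+1)
  rw [h2, Finset.sum_Icc_succ_top (by omega)] at this
  have he : (-1 : ℂ) ^ (2*m+1+1+1) = -1 := Odd.neg_one_pow ⟨m+1, by ring⟩
  rw [he] at this
  have hc : ((2*m+1+1 : ℕ) : ℂ) = ((2*m+2 : ℕ) : ℂ) := by push_cast; ring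
  rw [hc] at this
  linear_combination this

end AuxAlternating

section Main
open Filter Complex Set Topology

theorem alternating_sum_cpow (s : ℂ) (hσ : 0 < s.re) (X : ℝ) (hX : 0 < X) :
    ‖((∑ n ∈ Finset.Icc 1 ⌊X⌋₊, (-1 : ℂ) ^ (n + 1) / (n : ℂ) ^ s)
          - (if s = 1 then (Real.log 2 : ℂ)
             else (1 - (2 : ℂ) ^ (1 - s)) * riemannZeta s))‖
      ≤ (s.re + ‖s‖) / (s.re * X ^ s.re) := by
  set σ := s.re with hσdef
  have hC : (if s = 1 then (Real.log 2 : ℂ)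
      else (1 - (2 : ℂ) ^ (1 - s)) * riemannZeta s) = ∑' k, aterm s k := by
    rcases eq_or_ne s 1 with rfl|hne
    · rw [if_pos rfl, etaF_one]
    · rw [if_neg hne, etaF_eq hσ hne]
  rw [hC]
  set N := ⌊X⌋₊ with hN
  have hXle : X ≤ (N:ℝ) + 1 := le_of_lt (Nat.lt_floor_add_one X)
  have hXrpow : ∀ y : ℝ, X ≤ y → y ^ (-σ) ≤ X ^ (-σ) := fun y hy =>
    Real.rpow_le_rpow_of_nonpos hX hy (by linarith)
  have hXσ : X ^ (-σ) = (X ^ σ)⁻¹ := Real.rpow_neg hX.le σ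
  have habs : ‖s‖ / σ * (X ^ (-σ)) + X ^ (-σ) ≤ (σ + ‖s‖) / (σ * X ^ σ) := by
    have hXp : 0 < X ^ σ := Real.rpow_pos_of_pos hX σ
    have hσ' : σ ≠ 0 := ne_of_gt hσ
    apply le_of_eq
    rw [hXσ]
    field_simp
    ring
  rcases Nat.even_or_odd N with ⟨m, hm⟩|⟨m, hm⟩
  · -- N = 2m
    have hpart : ∑ n ∈ Finset.Icc 1 N, (-1 : ℂ) ^ (n + 1) / (n : ℂ) ^ s =
        ∑ k ∈ Finset.range m, aterm s k := by
      rw [hm, show m + m = 2*m by ring, even_partial]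
    rw [hpart]
    have hsplit := Summable.sum_add_tsum_nat_add m (summable_aterm hσ)
    have : (∑ k ∈ Finset.range m, aterm s k) - ∑' k, aterm s k = -∑' k, aterm s (k+m) := by
      rw [← hsplit]; ring
    rw [this, norm_neg]
    calc ‖∑' k, aterm s (k+m)‖ ≤ (‖s‖ / σ) * vv σ m := tail_bound hσ m
      _ ≤ ‖s‖ / σ * (X ^ (-σ)) + X ^ (-σ) := by
          have h1 : vv σ m ≤ X ^ (-σ) := by
            have hval : vv σ m = ((2*m+1 : ℕ) : ℝ) ^ (-σ) := rfl
            rw [hval]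
            apply hXrpow
            have : ((2*m+1 : ℕ) : ℝ) = (N:ℝ) + 1 := by rw [hm]; push_cast; ring
            rw [this]; exact hXle
          have h2 : (0:ℝ) ≤ X ^ (-σ) := by positivity
          have h3 : (0:ℝ) ≤ ‖s‖ / σ := by positivity
          nlinarith
      _ ≤ (σ + ‖s‖) / (σ * X ^ σ) := habs
  · -- N = 2m+1
    have hpart : ∑ n ∈ Finset.Icc 1 N, (-1 : ℂ) ^ (n + 1) / (n : ℂ) ^ s =
        (∑ k ∈ Finset.range (m+1), aterm s k) + 1/((2*m+2 : ℕ) : ℂ)^s := by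
      rw [hm, show 2*m+1 = 2*m+1 from rfl, odd_partial]
    rw [hpart]
    have hsplit := Summable.sum_add_tsum_nat_add (m+1) (summable_aterm hσ)
    have hre : (∑ k ∈ Finset.range (m+1), aterm s k) + 1/((2*m+2 : ℕ) : ℂ)^s
        - ∑' k, aterm s k = 1/((2*m+2 : ℕ) : ℂ)^s - ∑' k, aterm s (k+(m+1)) := by
      rw [← hsplit]; ring
    rw [hre]
    have hterm : ‖1/((2*m+2 : ℕ) : ℂ)^s‖ = ((2*m+2 : ℕ) : ℝ) ^ (-σ) := by
      rw [show ((2*m+2 : ℕ) : ℂ) = (((2*m+2 : ℕ) : ℝ) : ℂ) by push_cast; ring,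
        one_div, ← Complex.cpow_neg,
        Complex.norm_cpow_eq_rpow_re_of_pos (by positivity)]
      simp [hσdef]
    calc ‖1/((2*m+2 : ℕ) : ℂ)^s - ∑' k, aterm s (k+(m+1))‖
        ≤ ‖1/((2*m+2 : ℕ) : ℂ)^s‖ + ‖∑' k, aterm s (k+(m+1))‖ := norm_sub_le _ _
      _ ≤ ((2*m+2 : ℕ) : ℝ) ^ (-σ) + (‖s‖ / σ) * vv σ (m+1) := by
          rw [hterm]
          exact add_le_add_right (tail_bound hσ (m+1)) _
      _ ≤ ‖s‖ / σ * (X ^ (-σ)) + X ^ (-σ) := by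
          have h1 : vv σ (m+1) ≤ X ^ (-σ) := by
            have hval : vv σ (m+1) = ((2*(m+1)+1 : ℕ) : ℝ) ^ (-σ) := rfl
            rw [hval]
            apply hXrpow
            have hc : (N:ℝ) + 1 ≤ ((2*(m+1)+1 : ℕ) : ℝ) := by rw [hm]; push_cast; linarith
            exact le_trans hXle hc
          have h2 : ((2*m+2 : ℕ) : ℝ) ^ (-σ) ≤ X ^ (-σ) := by
            apply hXrpow
            have : (N:ℝ) + 1 = ((2*m+2 : ℕ) : ℝ) := by rw [hm]; push_cast; ring
            linarith
          have h3 : (0:ℝ) ≤ ‖s‖ / σ := by positivity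
          nlinarith [norm_nonneg s]
      _ ≤ (σ + ‖s‖) / (σ * X ^ σ) := habs

end Main
end

section
/- Let q be a positive integer and s complex with Re s = σ > σ₀ > 0. Then |∑_{ℓ > X, ℓ | q^∞} 1/ℓ^s| ≤ X^{−σ₀} · q^{σ−σ₀}/φ_{σ−σ₀}(q), where φ_ω(q) = q^ω ∏_{p | q}(1 − p^{−ω}). -/
open Finset
open scoped Classical

theorem tail_sum_smooth_numbers (q : ℕ) (hq : 0 < q) (s : ℂ) (σ₀ : ℝ)
    (hσ₀ : 0 < σ₀) (hσ : σ₀ < s.re) (X : ℝ) (hX : 0 < X) :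
    ‖(∑' ℓ : ℕ, if X < ℓ ∧ (∀ p : ℕ, p.Prime → p ∣ ℓ → p ∣ q)
          then 1 / (ℓ : ℂ) ^ s else 0)‖
      ≤ X ^ (-σ₀) *
        ((q : ℝ) ^ (s.re - σ₀) /
          ((q : ℝ) ^ (s.re - σ₀) * ∏ p ∈ q.primeFactors, (1 - (p : ℝ) ^ (-(s.re - σ₀))))) := by
  set ω := s.re - σ₀ with hωdef
  have hω0 : 0 < ω := by simp only [hωdef]; linarith
  set f : ℕ → ℝ := fun n ↦ (n : ℝ) ^ (-ω) with hfdef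
  have hf1 : f 1 = 1 := by simp [hfdef]
  have hmul : ∀ {m n : ℕ}, Nat.Coprime m n → f (m * n) = f m * f n := by
    intro m n _
    simp only [hfdef, Nat.cast_mul]
    exact Real.mul_rpow m.cast_nonneg n.cast_nonneg
  have hsump : ∀ {p : ℕ}, p.Prime → Summable (fun n : ℕ ↦ ‖f (p ^ n)‖) := by
    intro p hp
    have hplt : (p : ℝ) ^ (-ω) < 1 :=
      Real.rpow_lt_one_of_one_lt_of_neg (by exact_mod_cast hp.one_lt) (by linarith)
    have h0 : 0 ≤ (p : ℝ) ^ (-ω) := Real.rpow_nonneg p.cast_nonneg _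
    have hkey : ∀ n : ℕ, f (p ^ n) = ((p : ℝ) ^ (-ω)) ^ n := by
      intro n
      simp only [hfdef, Nat.cast_pow]
      rw [← Real.rpow_natCast ((p : ℝ) ^ (-ω)) n, ← Real.rpow_mul p.cast_nonneg, mul_comm,
        Real.rpow_mul p.cast_nonneg, Real.rpow_natCast]
    simp_rw [hkey, Real.norm_eq_abs, abs_of_nonneg (pow_nonneg h0 _)]
    exact summable_geometric_of_lt_one h0 hplt
  obtain ⟨hsumS, hhasS⟩ :=
    EulerProduct.summable_and_hasSum_factoredNumbers_prod_filter_prime_tsum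
      hf1 hmul hsump q.primeFactors
  -- value of the product
  have hfilter : {p ∈ q.primeFactors | p.Prime} = q.primeFactors :=
    Finset.filter_true_of_mem fun p hp ↦ Nat.prime_of_mem_primeFactors hp
  have hprodval : (∏ p ∈ q.primeFactors with p.Prime, ∑' n : ℕ, f (p ^ n))
      = ∏ p ∈ q.primeFactors, (1 - (p : ℝ) ^ (-ω))⁻¹ := by
    rw [hfilter]
    refine Finset.prod_congr rfl fun p hp ↦ ?_
    have hpp := Nat.prime_of_mem_primeFactors hp
    have hplt : (p : ℝ) ^ (-ω) < 1 :=
      Real.rpow_lt_one_of_one_lt_of_neg (by exact_mod_cast hpp.one_lt) (by linarith)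
    have h0 : 0 ≤ (p : ℝ) ^ (-ω) := Real.rpow_nonneg p.cast_nonneg _
    have hkey : ∀ n : ℕ, f (p ^ n) = ((p : ℝ) ^ (-ω)) ^ n := by
      intro n
      simp only [hfdef, Nat.cast_pow]
      rw [← Real.rpow_natCast ((p : ℝ) ^ (-ω)) n, ← Real.rpow_mul p.cast_nonneg, mul_comm,
        Real.rpow_mul p.cast_nonneg, Real.rpow_natCast]
    simp_rw [hkey]
    exact tsum_geometric_of_lt_one h0 hplt
  -- the indicator function
  set g : ℕ → ℝ :=
    fun ℓ ↦ if ℓ ≠ 0 ∧ ∀ p : ℕ, p.Prime → p ∣ ℓ → p ∣ q then (ℓ : ℝ) ^ (-ω) else 0 with hgdef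
  have hgind : g = Set.indicator (Nat.factoredNumbers q.primeFactors) f := by
    funext ℓ
    simp only [hgdef, Set.indicator]
    congr 1
    simp only [eq_iff_iff, Nat.mem_factoredNumbers]
    constructor
    · rintro ⟨h0, h1⟩
      refine ⟨h0, fun p hp ↦ ?_⟩
      rw [Nat.mem_primeFactorsList h0] at hp
      exact Nat.mem_primeFactors.mpr ⟨hp.1, h1 p hp.1 hp.2, hq.ne'⟩
    · rintro ⟨h0, h1⟩
      refine ⟨h0, fun p hp hdvd ↦ ?_⟩
      exact (Nat.mem_primeFactors.mp (h1 p ((Nat.mem_primeFactorsList h0).mpr ⟨hp, hdvd⟩))).2.1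
  have hgHasSum : HasSum g (∏ p ∈ q.primeFactors, (1 - (p : ℝ) ^ (-ω))⁻¹) := by
    rw [hgind]
    rw [← hprodval]
    exact (hasSum_subtype_iff_indicator).mp hhasS
  have hgsum : Summable g := hgHasSum.summable
  have hgnonneg : ∀ ℓ, 0 ≤ g ℓ := by
    intro ℓ
    simp only [hgdef]
    split_ifs
    · exact Real.rpow_nonneg (Nat.cast_nonneg ℓ) _
    · exact le_rfl
  -- termwise bound
  have hbound : ∀ ℓ : ℕ,
      ‖(if X < ℓ ∧ (∀ p : ℕ, p.Prime → p ∣ ℓ → p ∣ q) then 1 / (ℓ : ℂ) ^ s else 0)‖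
        ≤ X ^ (-σ₀) * g ℓ := by
    intro ℓ
    by_cases h : X < ℓ ∧ (∀ p : ℕ, p.Prime → p ∣ ℓ → p ∣ q)
    · have hℓpos : (0 : ℝ) < ℓ := lt_trans hX h.1
      have hℓ0 : ℓ ≠ 0 := by exact_mod_cast hℓpos.ne'
      rw [if_pos h]
      have habs : ‖1 / (ℓ : ℂ) ^ s‖ = ((ℓ : ℝ) ^ s.re)⁻¹ := by
        rw [norm_div, norm_one]
        rw [show ((ℓ : ℂ)) = ((ℓ : ℝ) : ℂ) by push_cast; ring]
        rw [Complex.norm_cpow_eq_rpow_re_of_pos hℓpos]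
        exact one_div _
      rw [habs, ← Real.rpow_neg hℓpos.le]
      have hsplit : (ℓ : ℝ) ^ (-s.re) = (ℓ : ℝ) ^ (-σ₀) * (ℓ : ℝ) ^ (-ω) := by
        rw [← Real.rpow_add hℓpos]
        congr 1
        simp only [hωdef]; ring
      rw [hsplit]
      have hgℓ : g ℓ = (ℓ : ℝ) ^ (-ω) := by
        simp only [hgdef, if_pos (⟨hℓ0, h.2⟩ : ℓ ≠ 0 ∧ ∀ p : ℕ, p.Prime → p ∣ ℓ → p ∣ q)]
      rw [hgℓ]
      have h1 : (ℓ : ℝ) ^ (-σ₀) ≤ X ^ (-σ₀) :=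
        Real.rpow_le_rpow_of_nonpos hX h.1.le (by linarith)
      exact mul_le_mul_of_nonneg_right h1 (Real.rpow_nonneg (Nat.cast_nonneg ℓ) _)
    · rw [if_neg h]
      simp only [norm_zero]
      exact mul_nonneg (Real.rpow_nonneg hX.le _) (hgnonneg ℓ)
  have hXg : Summable fun ℓ ↦ X ^ (-σ₀) * g ℓ := hgsum.mul_left _
  have hFsum : Summable fun ℓ : ℕ ↦
      ‖(if X < ℓ ∧ (∀ p : ℕ, p.Prime → p ∣ ℓ → p ∣ q) then 1 / (ℓ : ℂ) ^ s else 0)‖ :=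
    Summable.of_nonneg_of_le (fun _ ↦ norm_nonneg _) hbound hXg
  calc ‖(∑' ℓ : ℕ, if X < ℓ ∧ (∀ p : ℕ, p.Prime → p ∣ ℓ → p ∣ q)
          then 1 / (ℓ : ℂ) ^ s else 0)‖
      ≤ ∑' ℓ : ℕ, ‖(if X < ℓ ∧ (∀ p : ℕ, p.Prime → p ∣ ℓ → p ∣ q)
          then 1 / (ℓ : ℂ) ^ s else 0)‖ := norm_tsum_le_tsum_norm hFsum
    _ ≤ ∑' ℓ : ℕ, X ^ (-σ₀) * g ℓ := Summable.tsum_le_tsum hbound hFsum hXg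
    _ = X ^ (-σ₀) * ∑' ℓ, g ℓ := tsum_mul_left
    _ = X ^ (-σ₀) * ∏ p ∈ q.primeFactors, (1 - (p : ℝ) ^ (-ω))⁻¹ := by
        rw [hgHasSum.tsum_eq]
    _ = X ^ (-σ₀) * ((q : ℝ) ^ ω /
          ((q : ℝ) ^ ω * ∏ p ∈ q.primeFactors, (1 - (p : ℝ) ^ (-ω)))) := by
        congr 1
        rw [Finset.prod_inv_distrib]
        have hq0 : (q : ℝ) ^ ω ≠ 0 :=
          (Real.rpow_pos_of_pos (by exact_mod_cast hq) _).ne'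
        rw [div_mul_cancel_left₀ hq0]
end

section
/- For every ε > 0, 1/ε < ζ(1+ε), and also ζ(1+ε) ≤ e^{γε}/ε where γ is the Euler–Mascheroni constant. -/
open Real Filter Topology

private lemma two_mul_le_exp_sub (t : ℝ) (ht : 0 ≤ t) :
    2 * t ≤ Real.exp t - Real.exp (-t) := by
  rcases ht.eq_or_lt with h | h
  · simp [← h]
  · have h2 := Real.self_lt_sinh_iff.mpr h
    rw [Real.sinh_eq] at h2
    linarith

private lemma log_trapezoid (a : ℝ) (ha : 0 < a) :
    Real.log ((a + 1) / a) ≤ 1 / (2 * a) + 1 / (2 * (a + 1)) := by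
  set t := Real.log ((a + 1) / a) / 2 with ht_def
  have hx : (1 : ℝ) ≤ (a + 1) / a := by rw [le_div_iff₀ ha]; linarith
  have ht : 0 ≤ t := div_nonneg (Real.log_nonneg hx) (by norm_num)
  set E := Real.exp t with hE_def
  have hEpos : 0 < E := Real.exp_pos t
  have hE2 : E ^ 2 = (a + 1) / a := by
    rw [hE_def, sq, ← Real.exp_add, ht_def,
      show Real.log ((a + 1) / a) / 2 + Real.log ((a + 1) / a) / 2 = Real.log ((a + 1) / a) by
        ring]
    exact Real.exp_log (by positivity)
  have hE2' : a * E ^ 2 = a + 1 := by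
    rw [hE2]; field_simp
  have hkey : 2 * a * E ≤ 2 * a + 1 := by
    nlinarith [hE2', ha, hEpos, mul_pos (mul_pos (by norm_num : (0:ℝ) < 2) ha) hEpos,
      sq_nonneg (2 * a * E - (2 * a + 1))]
  have hsinh := two_mul_le_exp_sub t ht
  have h2t : 2 * t = Real.log ((a + 1) / a) := by rw [ht_def]; ring
  have hEinv : Real.exp (-t) = E⁻¹ := by rw [Real.exp_neg]
  have hEinv_eq : E⁻¹ = a * E / (a + 1) := by
    rw [eq_div_iff (by positivity : (a:ℝ) + 1 ≠ 0), inv_mul_eq_div, div_eq_iff hEpos.ne']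
    nlinarith [hE2']
  have h6 : E - E⁻¹ = E / (a + 1) := by
    rw [hEinv_eq]
    field_simp
    ring
  have h7 : E / (a + 1) ≤ 1 / (2 * a) + 1 / (2 * (a + 1)) := by
    rw [div_add_div _ _ (by positivity) (by positivity),
      div_le_div_iff₀ (by positivity) (by positivity)]
    nlinarith [hkey, ha, hEpos]
  rw [← h2t]
  rw [hEinv] at hsinh
  linarith

private lemma harmonic_le_gamma_aux (n : ℕ) (hn : 1 ≤ n) :
    (harmonic n : ℝ) - Real.log n - 1 / (2 * n) ≤ Real.eulerMascheroniConstant := by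
  set c : ℕ → ℝ := fun m => (harmonic m : ℝ) - Real.log m - 1 / (2 * m) with hc
  have hstep : ∀ m : ℕ, 1 ≤ m → c m ≤ c (m + 1) := by
    intro m hm
    have hm0 : (0 : ℝ) < m := by exact_mod_cast hm
    have htrap := log_trapezoid m hm0
    have hlog : Real.log ((m : ℝ) + 1) = Real.log m + Real.log (((m : ℝ) + 1) / m) := by
      rw [Real.log_div (by positivity) hm0.ne']
      ring
    have e1 : ((m : ℝ) + 1)⁻¹ = 2 * (1 / (2 * ((m : ℝ) + 1))) := by field_simp
    simp only [hc, harmonic_succ]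
    push_cast
    rw [hlog]
    linarith
  have hmono : ∀ k : ℕ, c n ≤ c (n + k) := by
    intro k
    induction k with
    | zero => simp
    | succ k ih =>
        exact ih.trans (by simpa [Nat.add_assoc] using hstep (n + k) (le_trans hn (Nat.le_add_right n k)))
  have h2 : Tendsto (fun m : ℕ => 1 / (2 * (m : ℝ))) atTop (𝓝 0) := by
    refine (tendsto_const_div_atTop_nhds_zero_nat (1 / 2)).congr fun m => ?_
    rw [div_div]
  have htend : Tendsto c atTop (𝓝 Real.eulerMascheroniConstant) := by
    have h1 := Real.tendsto_harmonic_sub_log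
    have := h1.sub h2
    rw [sub_zero] at this
    exact this
  refine ge_of_tendsto htend (eventually_atTop.mpr ⟨n, fun m hm => ?_⟩)
  obtain ⟨k, rfl⟩ := Nat.exists_eq_add_of_le hm
  exact hmono k

private lemma hasSum_telescope_nonneg {b : ℕ → ℝ} (hmono : ∀ n, b (n + 1) ≤ b n)
    (hlim : Tendsto b atTop (𝓝 0)) : HasSum (fun n => b n - b (n + 1)) (b 0) := by
  rw [hasSum_iff_tendsto_nat_of_nonneg (fun n => sub_nonneg.mpr (hmono n))]
  have hsum : ∀ N, ∑ i ∈ Finset.range N, (b i - b (i + 1)) = b 0 - b N := fun N =>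
    Finset.sum_range_sub' b N
  simp_rw [hsum]
  simpa using tendsto_const_nhds.sub hlim

theorem zeta_one_add_eps_bounds (ε : ℝ) (hε : 0 < ε) :
    1 / ε < (riemannZeta (1 + ε)).re ∧
      (riemannZeta (1 + ε)).re ≤ Real.exp (Real.eulerMascheroniConstant * ε) / ε := by
  set γ := Real.eulerMascheroniConstant with hγ
  have hs1 : 1 < Complex.re (1 + (ε : ℂ)) := by
    simp [Complex.add_re, hε]
  set f : ℕ → ℝ := fun n => 1 / ((n : ℝ) + 1) ^ (1 + ε) with hf
  -- re of zeta is the real series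
  have hre : (riemannZeta (1 + ε)).re = ∑' n, f n := by
    rw [zeta_eq_tsum_one_div_nat_add_one_cpow hs1]
    have hterm : ∀ n : ℕ, (1 / ((n : ℂ) + 1) ^ (1 + (ε : ℂ))) = ((f n : ℝ) : ℂ) := by
      intro n
      rw [hf]
      rw [Complex.ofReal_div, Complex.ofReal_one, Complex.ofReal_cpow (by positivity)]
      push_cast
      ring
    rw [show (∑' n : ℕ, 1 / ((n : ℂ) + 1) ^ (1 + (ε : ℂ))) = ((∑' n, f n : ℝ) : ℂ) by
      rw [Complex.ofReal_tsum]; exact tsum_congr hterm]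
    exact Complex.ofReal_re _
  have hsum : Summable f := by
    have h1 : Summable (fun n : ℕ => 1 / (n : ℝ) ^ (1 + ε)) :=
      Real.summable_one_div_nat_rpow.mpr (by linarith)
    have h2 := (summable_nat_add_iff 1).mpr h1
    refine h2.congr fun n => ?_
    push_cast
    ring_nf
    rw [hf]; dsimp only; rw [one_div, add_comm (n:ℝ) 1]
  constructor
  · -- lower bound
    set b : ℕ → ℝ := fun n => (1 / ((n : ℝ) + 1) ^ ε) / ε with hb
    have hbmono : ∀ n, b (n + 1) ≤ b n := by
      intro n
      rw [hb]
      dsimp only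
      have h1 : (0:ℝ) < ((n:ℝ) + 1) ^ ε := by positivity
      have h2 : ((n:ℝ) + 1) ^ ε ≤ (((n+1:ℕ):ℝ) + 1) ^ ε :=
        Real.rpow_le_rpow (by positivity) (by push_cast; linarith) hε.le
      have h3 := one_div_le_one_div_of_le h1 h2
      exact div_le_div_of_nonneg_right h3 hε.le
    have hblim : Tendsto b atTop (𝓝 0) := by
      have h1 : Tendsto (fun n : ℕ => ((n : ℝ) + 1) ^ ε) atTop atTop :=
        (tendsto_rpow_atTop hε).comp
          (tendsto_atTop_add_const_right _ 1 tendsto_natCast_atTop_atTop)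
      have h2 := h1.inv_tendsto_atTop.div_const ε
      rw [zero_div] at h2
      refine h2.congr fun n => ?_
      rw [hb]
      simp [one_div]
    have htel := hasSum_telescope_nonneg hbmono hblim
    have hb0 : b 0 = 1 / ε := by
      rw [hb]; norm_num
    have h_le : ∀ n, b n - b (n + 1) ≤ f n := by
      intro n
      set m : ℝ := (n : ℝ) + 1 with hm_def
      have hm0 : (0 : ℝ) < m := by positivity
      have hm1 : (1 : ℝ) ≤ m := by rw [hm_def]; simp
      set A : ℝ := m ^ ε with hA
      set B : ℝ := (m + 1) ^ ε with hB
      have hApos : 0 < A := rpow_pos_of_pos hm0 ε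
      have hBpos : 0 < B := rpow_pos_of_pos (by linarith) ε
      have hAB : A / B = (m / (m + 1)) ^ ε := by
        rw [hA, hB, Real.div_rpow hm0.le (by linarith)]
      have hABle : 1 - A / B ≤ ε / m := by
        have hlog1 : Real.log ((m + 1) / m) ≤ 1 / m := by
          have := Real.log_le_sub_one_of_pos (show (0:ℝ) < (m + 1) / m by positivity)
          have heq : (m + 1) / m - 1 = 1 / m := by field_simp; ring
          linarith
        have hexp : 1 + Real.log (m / (m + 1)) * ε ≤ (m / (m + 1)) ^ ε := by
          rw [Real.rpow_def_of_pos (by positivity)]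
          linarith [Real.add_one_le_exp (Real.log (m / (m + 1)) * ε)]
        have hloginv : Real.log (m / (m + 1)) = -Real.log ((m + 1) / m) := by
          rw [show m / (m + 1) = ((m + 1) / m)⁻¹ by field_simp, Real.log_inv]
        rw [hAB]
        have : ε * Real.log ((m + 1) / m) ≤ ε * (1 / m) :=
          mul_le_mul_of_nonneg_left hlog1 hε.le
        rw [hloginv] at hexp
        have hεm : ε * (1 / m) = ε / m := by ring
        nlinarith
      have hfn : f n = 1 / (m * A) := by
        rw [hf, hA]
        dsimp only
        rw [← hm_def, Real.rpow_add hm0, Real.rpow_one]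
      have hbn : b n - b (n + 1) = (1 / A - 1 / B) / ε := by
        rw [hb, hA, hB]
        dsimp only
        rw [← hm_def]
        push_cast
        ring
      rw [hfn, hbn]
      have hchain : 1 / A - 1 / B ≤ ε / (m * A) := by
        have step1 : 1 / A - 1 / B = (1 / A) * (1 - A / B) := by
          field_simp
        have step2 : (1 / A) * (1 - A / B) ≤ (1 / A) * (ε / m) :=
          mul_le_mul_of_nonneg_left hABle (by positivity)
        have step3 : (1 / A) * (ε / m) = ε / (m * A) := by
          rw [div_mul_div_comm, one_mul, mul_comm A m]
        linarith
      rw [div_le_iff₀ hε]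
      calc 1 / A - 1 / B ≤ ε / (m * A) := hchain
        _ = 1 / (m * A) * ε := by ring
    have h_lt : b 0 - b 1 < f 0 := by
      have hf0 : f 0 = 1 := by
        rw [hf]; norm_num
      have hb1 : b 1 = (1 / (2 : ℝ) ^ ε) / ε := by
        rw [hb]; norm_num
      have h2e : (2 : ℝ) ^ ε = Real.exp (Real.log 2 * ε) := Real.rpow_def_of_pos (by norm_num) ε
      have hlt : 1 - 1 / (2 : ℝ) ^ ε < ε := by
        have hne : -(Real.log 2 * ε) ≠ 0 := by
          have := Real.log_pos (by norm_num : (1:ℝ) < 2)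
          intro h
          apply absurd h
          simp only [neg_eq_zero]
          positivity
        have hexp := Real.add_one_lt_exp hne
        have h1 : 1 / (2 : ℝ) ^ ε = Real.exp (-(Real.log 2 * ε)) := by
          rw [h2e, Real.exp_neg, one_div]
        have hlog2 : Real.log 2 < 1 := by
          have := Real.log_lt_sub_one_of_pos (by norm_num : (0:ℝ) < 2) (by norm_num)
          linarith
        have : Real.log 2 * ε < ε := by nlinarith
        rw [h1]
        linarith
      rw [hf0, hb0, hb1,
        show 1 / ε - 1 / (2:ℝ) ^ ε / ε = (1 - 1 / (2:ℝ) ^ ε) / ε by ring, div_lt_one hε]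
      exact hlt
    have := Summable.tsum_lt_tsum_of_nonneg (fun n => sub_nonneg.mpr (hbmono n)) h_le h_lt hsum
    rw [htel.tsum_eq, hb0] at this
    rw [hre]
    exact this
  · -- upper bound
    set a : ℕ → ℝ := fun n => Real.exp (-(ε * (harmonic n : ℝ))) with ha
    have hamono : ∀ n, a (n + 1) ≤ a n := by
      intro n
      rw [ha]
      dsimp only
      rw [Real.exp_le_exp, neg_le_neg_iff]
      have h1 : (harmonic n : ℝ) ≤ (harmonic (n + 1) : ℝ) := by
        rw [harmonic_succ]
        push_cast
        have : (0:ℝ) ≤ ((n:ℝ) + 1)⁻¹ := by positivity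
        linarith
      exact mul_le_mul_of_nonneg_left h1 hε.le
    have hH : Tendsto (fun n : ℕ => (harmonic n : ℝ)) atTop atTop := by
      refine Real.tendsto_sum_range_one_div_nat_succ_atTop.congr fun n => ?_
      rw [harmonic]
      push_cast
      simp [one_div]
    have halim : Tendsto a atTop (𝓝 0) := by
      have h1 : Tendsto (fun n : ℕ => ε * (harmonic n : ℝ)) atTop atTop :=
        hH.const_mul_atTop hε
      exact Real.tendsto_exp_neg_atTop_nhds_zero.comp h1
    have htel := hasSum_telescope_nonneg hamono halim
    have ha0 : a 0 = 1 := by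
      rw [ha]
      simp [harmonic_zero]
    have hup : ∀ n, f n ≤ Real.exp (γ * ε) / ε * (a n - a (n + 1)) := by
      intro n
      set m : ℝ := (n : ℝ) + 1 with hm_def
      have hm0 : (0 : ℝ) < m := by positivity
      clear_value m
      set L : ℝ := Real.log m with hL
      clear_value L
      -- harmonic bound
      have hHn : (harmonic n : ℝ) ≤ γ + L - 1 / (2 * m) := by
        have hkey := harmonic_le_gamma_aux (n + 1) (Nat.le_add_left 1 n)
        have hc1 : (harmonic (n + 1) : ℝ) = (harmonic n : ℝ) + 1 / m := by
          rw [harmonic_succ]; push_cast; rw [hm_def]; ring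
        have hc2 : Real.log ((n + 1 : ℕ) : ℝ) = L := by
          rw [hL, hm_def]; norm_num
        have hc3 : (1 : ℝ) / (2 * ((n + 1 : ℕ) : ℝ)) = 1 / (2 * m) := by
          rw [hm_def]; norm_num
        rw [hc1, hc2, hc3] at hkey
        have e1 : (1 : ℝ) / m - 1 / (2 * m) = 1 / (2 * m) := by ring
        linarith
      -- a n - a (n+1) = a n * (1 - exp(-(ε/m)))
      have hsplit : a (n + 1) = a n * Real.exp (-(ε / m)) := by
        rw [ha]
        dsimp only
        rw [← Real.exp_add]
        congr 1
        rw [harmonic_succ, hm_def]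
        push_cast
        ring
      -- sinh bound : (ε/m) * exp(-(ε/(2m))) ≤ 1 - exp(-(ε/m))
      have hsinh : ε / m * Real.exp (-(ε / (2 * m))) ≤ 1 - Real.exp (-(ε / m)) := by
        have h := two_mul_le_exp_sub (ε / (2 * m)) (div_nonneg hε.le (by linarith))
        have h2 := mul_le_mul_of_nonneg_left h (Real.exp_pos (-(ε / (2 * m)))).le
        rw [mul_sub, ← Real.exp_add, ← Real.exp_add,
          show -(ε / (2 * m)) + ε / (2 * m) = 0 by ring, Real.exp_zero,
          show -(ε / (2 * m)) + -(ε / (2 * m)) = -(ε / m) by ring] at h2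
        calc ε / m * Real.exp (-(ε / (2 * m)))
            = Real.exp (-(ε / (2 * m))) * (2 * (ε / (2 * m))) := by ring
          _ ≤ 1 - Real.exp (-(ε / m)) := h2
      -- lower bound a n
      have haln : Real.exp (-(ε * (γ + L - 1 / (2 * m)))) ≤ a n := by
        rw [ha]
        dsimp only
        rw [Real.exp_le_exp, neg_le_neg_iff]
        exact mul_le_mul_of_nonneg_left hHn hε.le
      have hfn : f n = Real.exp (-(L * (1 + ε))) := by
        rw [hf, hL]
        dsimp only
        rw [← hm_def, Real.rpow_def_of_pos hm0, one_div, ← Real.exp_neg]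
      have hanpos : 0 < a n := Real.exp_pos _
      have hstep1 : Real.exp (γ * ε) / ε * (a n * (ε / m * Real.exp (-(ε / (2 * m))))) ≤
          Real.exp (γ * ε) / ε * (a n - a (n + 1)) := by
        rw [hsplit]
        have : a n * (ε / m * Real.exp (-(ε / (2 * m)))) ≤ a n * (1 - Real.exp (-(ε / m))) :=
          mul_le_mul_of_nonneg_left hsinh hanpos.le
        have hpos : (0:ℝ) ≤ Real.exp (γ * ε) / ε := by positivity
        calc Real.exp (γ * ε) / ε * (a n * (ε / m * Real.exp (-(ε / (2 * m)))))
            ≤ Real.exp (γ * ε) / ε * (a n * (1 - Real.exp (-(ε / m)))) :=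
              mul_le_mul_of_nonneg_left this hpos
          _ = Real.exp (γ * ε) / ε * (a n - a n * Real.exp (-(ε / m))) := by ring
      have hstep2 : Real.exp (γ * ε) / ε *
          (Real.exp (-(ε * (γ + L - 1 / (2 * m)))) * (ε / m * Real.exp (-(ε / (2 * m))))) ≤
          Real.exp (γ * ε) / ε * (a n * (ε / m * Real.exp (-(ε / (2 * m))))) := by
        have hpos : (0:ℝ) ≤ Real.exp (γ * ε) / ε := by positivity
        refine mul_le_mul_of_nonneg_left ?_ hpos
        exact mul_le_mul_of_nonneg_right haln
          (mul_nonneg (div_nonneg hε.le hm0.le) (Real.exp_pos _).le)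
      have heq : Real.exp (γ * ε) / ε *
          (Real.exp (-(ε * (γ + L - 1 / (2 * m)))) * (ε / m * Real.exp (-(ε / (2 * m))))) =
          Real.exp (-(L * (1 + ε))) := by
        have em : (1 : ℝ) / m = Real.exp (-L) := by
          rw [Real.exp_neg, hL, Real.exp_log hm0, one_div]
        have collect : Real.exp (γ * ε) / ε *
            (Real.exp (-(ε * (γ + L - 1 / (2 * m)))) * (ε / m * Real.exp (-(ε / (2 * m))))) =
            Real.exp (γ * ε) * Real.exp (-(ε * (γ + L - 1 / (2 * m)))) *
              Real.exp (-(ε / (2 * m))) * (1 / m) := by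
          field_simp [hε.ne', hm0.ne']
        rw [collect, ← Real.exp_add, ← Real.exp_add, em, ← Real.exp_add]
        congr 1
        ring
      rw [hfn, ← heq]
      exact hstep2.trans hstep1
    have hg : HasSum (fun n => Real.exp (γ * ε) / ε * (a n - a (n + 1)))
        (Real.exp (γ * ε) / ε * a 0) := htel.mul_left _
    have := Summable.tsum_le_tsum hup hsum hg.summable
    rw [hg.tsum_eq, ha0, mul_one] at this
    rw [hre]
    exact this
end

section
/- Define α(t) = (1 − 2{t})/t − ({t} − {t}²)/t² for t > 0. Then ∫_1^∞ |α(x)|·1_{α(x)<0} dx/x = (1 − γ)/2, where γ is the Euler–Mascheroni constant. -/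
open MeasureTheory Real Filter

noncomputable def alphaFn (x : ℝ) : ℝ :=
  (1 - 2 * Int.fract x) / x - (Int.fract x - Int.fract x ^ 2) / x ^ 2

noncomputable def fFn (x : ℝ) : ℝ := if alphaFn x < 0 then |alphaFn x| / x else 0

lemma alphaFn_eq (k : ℕ) (x : ℝ) (hx : x ∈ Set.Ioo ((k:ℝ)+1) ((k:ℝ)+1+1)) :
    alphaFn x = (((k:ℝ)+1)*((k:ℝ)+1+1) - x^2)/x^2 := by
  obtain ⟨h1, h2⟩ := hx
  have hx0 : (0:ℝ) < x := lt_trans (by positivity) h1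
  have hf : Int.fract x = x - ((k:ℝ)+1) := by
    have hfl : ⌊x⌋ = (k:ℤ) + 1 := by
      rw [Int.floor_eq_iff]
      constructor <;> push_cast <;> linarith
    rw [Int.fract, hfl]
    push_cast
    ring
  rw [alphaFn, hf]
  field_simp
  ring

lemma fFn_eq (k : ℕ) (x : ℝ) (hx : x ∈ Set.Ioo ((k:ℝ)+1) ((k:ℝ)+1+1)) :
    fFn x = max ((x^2 - ((k:ℝ)+1)*((k:ℝ)+1+1))/x^3) 0 := by
  have hx0 : (0:ℝ) < x := lt_trans (by positivity) hx.1
  set c : ℝ := ((k:ℝ)+1)*((k:ℝ)+1+1) with hc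
  rw [fFn, alphaFn_eq k x hx]
  rcases lt_or_ge c (x^2) with h | h
  · rw [if_pos (div_neg_of_neg_of_pos (by linarith) (by positivity)),
      abs_div, abs_of_neg (by linarith : c - x^2 < 0), abs_of_pos (by positivity : (0:ℝ) < x^2),
      max_eq_left (div_nonneg (by linarith) (by positivity)), div_div]
    congr 1
    ring
  · rw [if_neg (by push_neg; exact div_nonneg (by linarith) (by positivity)),
      max_eq_right (div_nonpos_of_nonpos_of_nonneg (by linarith) (by positivity))]

lemma hasDeriv_F (c : ℝ) (x : ℝ) (hx : 0 < x) :
    HasDerivAt (fun y => Real.log y + c/(2*y^2)) ((x^2 - c)/x^3) x := by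
  have h1 : HasDerivAt Real.log x⁻¹ x := Real.hasDerivAt_log hx.ne'
  have h2 : HasDerivAt (fun y : ℝ => 2*y^2) (2*(2*x)) x := by
    simpa using (hasDerivAt_pow 2 x).const_mul 2
  have h3 : HasDerivAt (fun y : ℝ => c/(2*y^2)) (c * (-(2*(2*x)) / (2*x^2)^2)) x := by
    simp only [div_eq_mul_inv]
    exact (h2.inv (by positivity)).const_mul c
  refine (h1.add h3).congr_deriv ?_
  have hx' : x ≠ 0 := hx.ne'
  field_simp
  ring

lemma piece (k : ℕ) :
    ∫ x in Set.Ioc ((k:ℝ)+1) ((k:ℝ)+1+1), fFn x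
      = (Real.log ((k:ℝ)+1+1) - Real.log ((k:ℝ)+1) - 1/((k:ℝ)+1+1)) / 2 := by
  set m : ℝ := (k:ℝ)+1 with hm
  have hm0 : (0:ℝ) < m := by rw [hm]; positivity
  set c : ℝ := m*(m+1) with hc
  have hc0 : (0:ℝ) < c := by rw [hc]; positivity
  set s : ℝ := Real.sqrt c with hs
  have hs2 : s^2 = c := Real.sq_sqrt hc0.le
  have hs0 : 0 < s := Real.sqrt_pos.mpr hc0
  have hms : m ≤ s := by
    rw [hs, show m = Real.sqrt (m^2) from (Real.sqrt_sq hm0.le).symm]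
    apply Real.sqrt_le_sqrt
    rw [hc]; nlinarith
  have hsm : s ≤ m + 1 := by
    rw [hs, show m+1 = Real.sqrt ((m+1)^2) from (Real.sqrt_sq (by linarith)).symm]
    apply Real.sqrt_le_sqrt
    rw [hc]; nlinarith
  set g : ℝ → ℝ := fun x => max ((x^2 - c)/x^3) 0 with hg
  have hgc : ContinuousOn g (Set.Icc m (m+1)) := by
    refine ContinuousOn.sup (ContinuousOn.div (by fun_prop) (by fun_prop) ?_) continuousOn_const
    intro x hx
    have hx0 : 0 < x := lt_of_lt_of_le hm0 hx.1
    positivity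
  have step1 : ∫ x in Set.Ioc m (m+1), fFn x = ∫ x in Set.Ioc m (m+1), g x := by
    rw [integral_Ioc_eq_integral_Ioo, integral_Ioc_eq_integral_Ioo]
    apply setIntegral_congr_fun measurableSet_Ioo
    intro x hx
    exact fFn_eq k x hx
  rw [step1, ← intervalIntegral.integral_of_le (by linarith)]
  have hi1 : IntervalIntegrable g volume m s := by
    apply ContinuousOn.intervalIntegrable
    rw [Set.uIcc_of_le hms]
    exact hgc.mono (Set.Icc_subset_Icc le_rfl hsm)
  have hi2 : IntervalIntegrable g volume s (m+1) := by
    apply ContinuousOn.intervalIntegrable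
    rw [Set.uIcc_of_le hsm]
    exact hgc.mono (Set.Icc_subset_Icc hms le_rfl)
  rw [← intervalIntegral.integral_add_adjacent_intervals hi1 hi2]
  have e1 : ∫ x in m..s, g x = 0 := by
    rw [intervalIntegral.integral_congr (g := fun _ => (0:ℝ)), intervalIntegral.integral_zero]
    intro x hx
    rw [Set.uIcc_of_le hms] at hx
    have hx0 : 0 < x := lt_of_lt_of_le hm0 hx.1
    have hxc : x^2 ≤ c := by nlinarith [hx.2, hs2]
    simp only [hg]
    exact max_eq_right (div_nonpos_of_nonpos_of_nonneg (by linarith) (by positivity))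
  have e2 : ∫ x in s..(m+1), g x
      = (Real.log (m+1) + c/(2*(m+1)^2)) - (Real.log s + c/(2*s^2)) := by
    have hEq : Set.EqOn g (fun x => (x^2 - c)/x^3) (Set.uIcc s (m+1)) := by
      intro x hx
      rw [Set.uIcc_of_le hsm] at hx
      have hx0 : 0 < x := lt_of_lt_of_le hs0 hx.1
      have hxc : c ≤ x^2 := by nlinarith [hx.1, hs2]
      simp only [hg]
      exact max_eq_left (div_nonneg (by linarith) (by positivity))
    rw [intervalIntegral.integral_congr hEq]
    have hder : ∀ x ∈ Set.uIcc s (m+1),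
        HasDerivAt (fun y => Real.log y + c/(2*y^2)) ((x^2 - c)/x^3) x := by
      intro x hx
      rw [Set.uIcc_of_le hsm] at hx
      exact hasDeriv_F c x (lt_of_lt_of_le hs0 hx.1)
    have hint : IntervalIntegrable (fun x => (x^2 - c)/x^3) volume s (m+1) := by
      apply ContinuousOn.intervalIntegrable
      rw [Set.uIcc_of_le hsm]
      refine ContinuousOn.div (by fun_prop) (by fun_prop) ?_
      intro x hx
      have hx0 : 0 < x := lt_of_lt_of_le hs0 hx.1
      positivity
    simpa using intervalIntegral.integral_eq_sub_of_hasDerivAt hder hint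
  rw [e1, e2, zero_add, hs2, hs, Real.log_sqrt hc0.le]
  rw [hc, Real.log_mul hm0.ne' (by linarith)]
  have hne : m + 1 ≠ 0 := by positivity
  field_simp
  ring

lemma fFn_meas : Measurable fFn := by
  have hα : Measurable alphaFn := by
    apply Measurable.sub
    · exact (measurable_const.sub (measurable_fract.const_mul 2)).div measurable_id
    · exact (measurable_fract.sub (measurable_fract.pow_const 2)).div (measurable_id.pow_const 2)
  exact Measurable.ite (measurableSet_lt hα measurable_const)
    (hα.abs.div measurable_id) measurable_const

lemma fFn_nonneg (x : ℝ) (hx : 0 < x) : 0 ≤ fFn x := by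
  rw [fFn]
  split_ifs with h
  · positivity
  · exact le_rfl

lemma fFn_bound {x : ℝ} (hx : 1 < x) : ‖fFn x‖ ≤ 2 * x ^ (-2 : ℝ) := by
  have hx0 : (0:ℝ) < x := by linarith
  have hrp : x ^ (-2 : ℝ) = (x^2)⁻¹ := by
    rw [Real.rpow_neg hx0.le, show (2:ℝ) = ((2:ℕ):ℝ) by norm_num, Real.rpow_natCast]
  have ht0 : 0 ≤ Int.fract x := Int.fract_nonneg x
  have ht1 : Int.fract x < 1 := Int.fract_lt_one x
  have e1 : |(1 - 2*Int.fract x)/x| ≤ 1/x := by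
    rw [abs_div, abs_of_pos hx0]
    apply div_le_div_of_nonneg_right _ hx0.le
    exact abs_le.mpr ⟨by linarith, by linarith⟩
  have e2 : |(Int.fract x - Int.fract x^2)/x^2| ≤ 1/x^2 := by
    rw [abs_div, abs_of_pos (by positivity : (0:ℝ) < x^2)]
    apply div_le_div_of_nonneg_right _ (by positivity)
    exact abs_le.mpr ⟨by nlinarith, by nlinarith⟩
  have hαb : |alphaFn x| ≤ 2/x := by
    have h3 : 1/x^2 ≤ 1/x := by
      apply one_div_le_one_div_of_le hx0
      nlinarith
    calc |alphaFn x| ≤ |(1 - 2*Int.fract x)/x| + |(Int.fract x - Int.fract x^2)/x^2| := by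
          rw [alphaFn]; exact abs_sub _ _
      _ ≤ 1/x + 1/x^2 := by linarith
      _ ≤ 2/x := by rw [show (2:ℝ)/x = 1/x + 1/x by ring]; linarith
  rw [Real.norm_eq_abs, abs_of_nonneg (fFn_nonneg x hx0), hrp]
  rw [fFn]
  split_ifs with h
  · calc |alphaFn x|/x ≤ (2/x)/x := by gcongr
      _ = 2 * (x^2)⁻¹ := by rw [div_div, ← pow_two]; ring
  · positivity

lemma fFn_int : IntegrableOn fFn (Set.Ioi 1) := by
  apply Integrable.mono' ((integrableOn_Ioi_rpow_of_lt (by norm_num : (-2:ℝ) < -1)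
    one_pos).const_mul 2)
  · exact fFn_meas.aestronglyMeasurable.restrict
  · filter_upwards [ae_restrict_mem measurableSet_Ioi] with x hx
    exact fFn_bound hx

lemma Ioi_union : Set.Ioi (1:ℝ) = ⋃ n : ℕ, Set.Ioc ((n:ℝ)+1) ((n:ℝ)+1+1) := by
  ext x
  simp only [Set.mem_Ioi, Set.mem_iUnion, Set.mem_Ioc]
  constructor
  · intro hx
    refine ⟨(⌈x - 2⌉).toNat, ?_, ?_⟩
    · by_cases h : x ≤ 2
      · have h0 : ⌈x-2⌉ ≤ 0 := Int.ceil_le.mpr (by push_cast; linarith)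
        have hn : (⌈x-2⌉).toNat = 0 := Int.toNat_of_nonpos h0
        rw [hn]; push_cast; linarith
      · push_neg at h
        have h0 : (0:ℤ) ≤ ⌈x-2⌉ := Int.ceil_nonneg (by linarith)
        have hc' : ((⌈x-2⌉).toNat : ℤ) = ⌈x-2⌉ := Int.toNat_of_nonneg h0
        have hc : ((⌈x-2⌉).toNat : ℝ) = ((⌈x-2⌉ : ℤ) : ℝ) := by
          exact_mod_cast congrArg (fun z : ℤ => (z : ℝ)) hc'
        have hlt : ((⌈x-2⌉ : ℤ) : ℝ) < x - 2 + 1 := Int.ceil_lt_add_one _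
        rw [hc]
        linarith
    · by_cases h : x ≤ 2
      · have h0 : ⌈x-2⌉ ≤ 0 := Int.ceil_le.mpr (by push_cast; linarith)
        have hn : (⌈x-2⌉).toNat = 0 := Int.toNat_of_nonpos h0
        rw [hn]; push_cast; linarith
      · push_neg at h
        have h0 : (0:ℤ) ≤ ⌈x-2⌉ := Int.ceil_nonneg (by linarith)
        have hc' : ((⌈x-2⌉).toNat : ℤ) = ⌈x-2⌉ := Int.toNat_of_nonneg h0
        have hc : ((⌈x-2⌉).toNat : ℝ) = ((⌈x-2⌉ : ℤ) : ℝ) := by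
          exact_mod_cast congrArg (fun z : ℤ => (z : ℝ)) hc'
        have hle : x - 2 ≤ ((⌈x-2⌉ : ℤ) : ℝ) := Int.le_ceil _
        rw [hc]
        linarith
  · rintro ⟨n, h1, _⟩
    have : (0:ℝ) ≤ n := n.cast_nonneg
    linarith

lemma Ioc_disj : Pairwise (Function.onFun Disjoint
    (fun n : ℕ => Set.Ioc ((n:ℝ)+1) ((n:ℝ)+1+1))) := by
  intro i j hij
  have key : ∀ a b : ℕ, a < b → Disjoint (Set.Ioc ((a:ℝ)+1) ((a:ℝ)+1+1))
      (Set.Ioc ((b:ℝ)+1) ((b:ℝ)+1+1)) := by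
    intro a b hab
    apply Set.Ioc_disjoint_Ioc.mpr
    have : (a:ℝ)+1 ≤ (b:ℝ) := by exact_mod_cast Nat.succ_le_of_lt hab
    refine le_trans (min_le_left _ _) (le_trans ?_ (le_max_right _ _))
    linarith
  rcases hij.lt_or_gt with h | h
  · exact key i j h
  · exact (key j i h).symm

lemma sum_part : HasSum
    (fun n : ℕ => (Real.log ((n:ℝ)+1+1) - Real.log ((n:ℝ)+1) - 1/((n:ℝ)+1+1)) / 2)
    ((1 - Real.eulerMascheroniConstant)/2) := by
  refine (hasSum_iff_tendsto_nat_of_nonneg ?_ _).mpr ?_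
  · intro n
    have h1 : (0:ℝ) < (n:ℝ)+1 := by positivity
    have h2 : (0:ℝ) < (n:ℝ)+1+1 := by positivity
    have hlog : 1/((n:ℝ)+1+1) ≤ Real.log ((n:ℝ)+1+1) - Real.log ((n:ℝ)+1) := by
      have hq := Real.log_le_sub_one_of_pos (show (0:ℝ) < ((n:ℝ)+1)/((n:ℝ)+1+1) by positivity)
      rw [Real.log_div h1.ne' h2.ne'] at hq
      have h3 : ((n:ℝ)+1)/((n:ℝ)+1+1) - 1 = -(1/((n:ℝ)+1+1)) := by field_simp; ring
      rw [h3] at hq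
      linarith
    linarith
  · have key : ∀ N : ℕ, ∑ n ∈ Finset.range N,
        (Real.log ((n:ℝ)+1+1) - Real.log ((n:ℝ)+1) - 1/((n:ℝ)+1+1))/2
        = (1 - ((harmonic (N+1) : ℝ) - Real.log ((N:ℝ)+1)))/2 := by
      intro N
      rw [← Finset.sum_div]
      congr 1
      rw [Finset.sum_sub_distrib]
      have t1 : ∑ n ∈ Finset.range N, (Real.log ((n:ℝ)+1+1) - Real.log ((n:ℝ)+1))
          = Real.log ((N:ℝ)+1) := by
        have h := Finset.sum_range_sub (f := fun n : ℕ => Real.log ((n:ℝ)+1)) N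
        push_cast at h ⊢
        simpa using h
      have t2 : ∑ n ∈ Finset.range N, 1/((n:ℝ)+1+1) = (harmonic (N+1) : ℝ) - 1 := by
        have hh : (harmonic (N+1) : ℝ) = ∑ i ∈ Finset.range (N+1), 1/((i:ℝ)+1) := by
          rw [harmonic]
          push_cast
          simp [one_div]
        rw [hh, Finset.sum_range_succ']
        push_cast
        ring
      rw [t1, t2]
      ring
    have hfun : (fun N : ℕ => ∑ n ∈ Finset.range N,
        (Real.log ((n:ℝ)+1+1) - Real.log ((n:ℝ)+1) - 1/((n:ℝ)+1+1))/2)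
        = fun N : ℕ => (1 - ((harmonic (N+1) : ℝ) - Real.log ((N:ℝ)+1)))/2 :=
      funext key
    rw [hfun]
    have h2 : Tendsto (fun N : ℕ => (harmonic (N+1) : ℝ) - Real.log ((N:ℝ)+1)) atTop
        (nhds Real.eulerMascheroniConstant) := by
      have h3 := Real.tendsto_harmonic_sub_log.comp (tendsto_add_atTop_nat 1)
      apply h3.congr
      intro N
      simp only [Function.comp]
      push_cast
      ring_nf
    exact (tendsto_const_nhds.sub h2).div_const 2

theorem integral_alpha_neg_part :
    (∫ x in Set.Ioi (1 : ℝ),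
        (if ((1 - 2 * Int.fract x) / x - (Int.fract x - Int.fract x ^ 2) / x ^ 2) < 0
         then |(1 - 2 * Int.fract x) / x - (Int.fract x - Int.fract x ^ 2) / x ^ 2| / x
         else 0))
      = (1 - Real.eulerMascheroniConstant) / 2 := by
  have hfeq : (fun x : ℝ =>
      (if ((1 - 2 * Int.fract x) / x - (Int.fract x - Int.fract x ^ 2) / x ^ 2) < 0
       then |(1 - 2 * Int.fract x) / x - (Int.fract x - Int.fract x ^ 2) / x ^ 2| / x
       else 0)) = fFn := by
    funext x
    rw [fFn, alphaFn]
  rw [hfeq, Ioi_union,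
    integral_iUnion (fun n => measurableSet_Ioc) Ioc_disj (Ioi_union ▸ fFn_int)]
  rw [tsum_congr piece]
  exact sum_part.tsum_eq
end
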